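/- arXiv:2401.15301 — 4 statements merged into one kernel-verified Lean document; each statement's English description precedes it below -/
import Mathlib

section
/- For every α ∈ (0,1) and every C ≥ 1 there exists a constant C₀ = C₀(α, C) > 0 with the following property: whenever x and y are real numbers with 0 < x ≤ y ≤ 1 and x^{2-α} ≤ C (y - x), one has x^{α-1} - y^{α-1} ≥ C₀. -/
/-- For `α ∈ (0,1)` and `C ≥ 1` there is `C₀ > 0` such that whenever
`0 < x ≤ y ≤ 1` and `x^{2-α} ≤ C (y - x)`, one has
`x^{α-1} - y^{α-1} ≥ C₀`. -/
theorem rpow_diff_ge_of_lojasiewicz_step (α C : ℝ)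
    (hα : α ∈ Set.Ioo (0 : ℝ) 1) (hC : 1 ≤ C) :
    ∃ C₀ > (0 : ℝ), ∀ x y : ℝ, 0 < x → x ≤ y → y ≤ 1 →
      x ^ (2 - α) ≤ C * (y - x) →
      C₀ ≤ x ^ (α - 1) - y ^ (α - 1) := by
  obtain ⟨hα0, hα1⟩ := hα
  have hC0 : (0 : ℝ) < C := lt_of_lt_of_le one_pos hC
  have h2lt : (2 : ℝ) ^ (α - 1) < 1 :=
    Real.rpow_lt_one_of_one_lt_of_neg one_lt_two (by linarith)
  refine ⟨min (1 - 2 ^ (α - 1)) ((1 - α) / (2 * C)), ?_, ?_⟩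
  · apply lt_min (by linarith)
    apply div_pos (by linarith) (by linarith)
  intro x y hx hxy hy1 hstep
  have hy : 0 < y := lt_of_lt_of_le hx hxy
  have hx1 : x ≤ 1 := hxy.trans hy1
  rcases le_or_gt y (2 * x) with h2 | h2
  · -- y ≤ 2x : use Bernoulli
    refine le_trans (min_le_right _ _) ?_
    set q : ℝ := 1 - α with hq
    have hq0 : 0 < q := by simp [hq]; linarith
    have hq1 : q ≤ 1 := by simp [hq]; linarith
    -- Bernoulli: (x/y)^q ≤ 1 + q * ((x-y)/y)
    have hs1 : -1 ≤ (x - y) / y := by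
      rw [le_div_iff₀ hy]; linarith
    have hb := rpow_one_add_le_one_add_mul_self hs1 hq0.le hq1
    have h1s : 1 + (x - y) / y = x / y := by field_simp; ring
    rw [h1s] at hb
    have hxq : 0 < x ^ q := Real.rpow_pos_of_pos hx q
    have hyq : 0 < y ^ q := Real.rpow_pos_of_pos hy q
    have hb2 : x ^ q ≤ y ^ q + q * y ^ q * ((x - y) / y) := by
      have := mul_le_mul_of_nonneg_left hb hyq.le
      rw [Real.div_rpow hx.le hy.le] at this
      rw [mul_add, mul_one] at this
      calc x ^ q = y ^ q * (x ^ q / y ^ q) := by field_simp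
        _ ≤ y ^ q + y ^ q * (q * ((x - y) / y)) := this
        _ = y ^ q + q * y ^ q * ((x - y) / y) := by ring
    -- so y^q - x^q ≥ q * y^q * (y-x)/y
    have hdiff : q * y ^ q * ((y - x) / y) ≤ y ^ q - x ^ q := by
      have e : q * y ^ q * ((y - x) / y) = -(q * y ^ q * ((x - y) / y)) := by ring
      linarith
    -- x^{α-1} - y^{α-1} = (y^q - x^q)/(x^q y^q)
    have hxm : x ^ (α - 1) = (x ^ q)⁻¹ := by
      rw [← Real.rpow_neg hx.le]; congr 1; rw [hq]; ring
    have hym : y ^ (α - 1) = (y ^ q)⁻¹ := by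
      rw [← Real.rpow_neg hy.le]; congr 1; rw [hq]; ring
    have heq : x ^ (α - 1) - y ^ (α - 1) = (y ^ q - x ^ q) / (x ^ q * y ^ q) := by
      rw [hxm, hym]; field_simp
    rw [heq]
    have hstep' : x ^ (2 - α) / C ≤ y - x := (div_le_iff₀' hC0).mpr hstep
    have hxq1 : x ^ q ≤ x ^ (q : ℝ) := le_rfl
    -- lower bound: (y^q - x^q)/(x^q y^q) ≥ q*(y-x)/(y*x^q)
    have key : q * ((y - x) / (y * x ^ q)) ≤ (y ^ q - x ^ q) / (x ^ q * y ^ q) := by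
      rw [le_div_iff₀ (by positivity : (0:ℝ) < x ^ q * y ^ q)]
      have h1 : q * ((y - x) / (y * x ^ q)) * (x ^ q * y ^ q)
          = q * y ^ q * ((y - x) / y) := by field_simp
      rw [h1]; exact hdiff
    refine le_trans ?_ key
    -- q*(y-x)/(y*x^q) ≥ q * (x^{2-α}/C) / (2x * x^{1-α}) = q/(2C)
    have hx2a : x ^ (2 - α) = x * x ^ q := by
      rw [← Real.rpow_one_add' hx.le (by simp [hq]; intro h; linarith)]
      congr 1; simp [hq]; ring
    have hden : y * x ^ q ≤ 2 * x ^ (2 - α) := by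
      rw [hx2a]
      calc y * x ^ q ≤ (2 * x) * x ^ q := by
            exact mul_le_mul_of_nonneg_right h2 hxq.le
        _ = 2 * (x * x ^ q) := by ring
    have hnum : x ^ (2 - α) / C ≤ y - x := hstep'
    have hx2a0 : 0 < x ^ (2 - α) := Real.rpow_pos_of_pos hx _
    have : (1 - α) / (2 * C) ≤ q * ((y - x) / (y * x ^ q)) := by
      have hden0 : 0 < y * x ^ q := by positivity
      have h1 : x ^ (2 - α) / C / (2 * x ^ (2 - α)) ≤ (y - x) / (y * x ^ q) := by
        exact div_le_div₀ (by linarith) hnum hden0 hden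
      have h2 : x ^ (2 - α) / C / (2 * x ^ (2 - α)) = 1 / (2 * C) := by
        field_simp
      calc (1 - α) / (2 * C) = q * (1 / (2 * C)) := by rw [hq]; ring
        _ ≤ q * ((y - x) / (y * x ^ q)) := by
            apply mul_le_mul_of_nonneg_left _ hq0.le
            rw [← h2]; exact h1
    exact this
  · -- 2x < y : crude bound
    refine le_trans (min_le_left _ _) ?_
    have hyle : y ^ (α - 1) ≤ (2 * x) ^ (α - 1) :=
      Real.rpow_le_rpow_of_nonpos (by positivity) h2.le (by linarith)
    have h2x : (2 * x) ^ (α - 1) = 2 ^ (α - 1) * x ^ (α - 1) :=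
      Real.mul_rpow (by norm_num) hx.le
    have hx1' : 1 ≤ x ^ (α - 1) :=
      Real.one_le_rpow_of_pos_of_le_one_of_nonpos hx hx1 (by linarith)
    have h2a0 : 0 < (2:ℝ) ^ (α - 1) := Real.rpow_pos_of_pos two_pos _
    calc 1 - 2 ^ (α - 1) = (1 - 2 ^ (α - 1)) * 1 := by ring
      _ ≤ (1 - 2 ^ (α - 1)) * x ^ (α - 1) := by
          apply mul_le_mul_of_nonneg_left hx1' (by linarith)
      _ = x ^ (α - 1) - 2 ^ (α - 1) * x ^ (α - 1) := by ring
      _ ≤ x ^ (α - 1) - y ^ (α - 1) := by rw [← h2x]; linarith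
end

section
/- Let α ∈ (0,1] and C ≥ 1. There exists a constant C' = C'(α, C) > 0 such that the following holds for every T ≥ 1. Let I : ℝ → ℝ be nondecreasing with 0 ≤ I(t) ≤ 1 for all t ∈ [0, T] and I(t)^{2-α} ≤ C (I(t+1) - I(t)) for all t ∈ (0, T-1]. Let f : ℝ → [0, ∞) be a measurable function such that for all 0 ≤ a ≤ b ≤ T, ∫_{\{t : a ≤ |t| ≤ b\}} f(t)² dt ≤ I(b) - I(a). Then ∫_{-T}^{T} f(t) dt ≤ C' · I(T)^{α/2}. -/
set_option maxHeartbeats 2000000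
open MeasureTheory
open scoped ENNReal

namespace DiniAux

/-- Key convexity step: from the recursion `x^{2-α} ≤ C (y - x)` we gain at least
`(1-α)/(4C)` on `x ↦ x^{α-1}`. -/
lemma step_ineq {α C x y : ℝ} (hα0 : 0 < α) (hα1 : α < 1) (hC : 1 ≤ C)
    (hx : 0 < x) (hxy : x ≤ y) (hy1 : y ≤ 1)
    (h : x ^ (2 - α) ≤ C * (y - x)) :
    y ^ (α - 1) + (1 - α) / (4 * C) ≤ x ^ (α - 1) := by
  have hy : 0 < y := lt_of_lt_of_le hx hxy
  have hC0 : 0 < C := lt_of_lt_of_le one_pos hC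
  have hβ0 : 0 < 1 - α := by linarith
  set X := x ^ (1 - α) with hXdef
  set Y := y ^ (1 - α) with hYdef
  have hX0 : 0 < X := Real.rpow_pos_of_pos hx _
  have hY0 : 0 < Y := Real.rpow_pos_of_pos hy _
  have hXY : X ≤ Y := Real.rpow_le_rpow hx.le hxy hβ0.le
  have hY1 : Y ≤ 1 := Real.rpow_le_one hy.le hy1 hβ0.le
  have hX1 : X ≤ 1 := le_trans hXY hY1
  have key : (1 - α) * (X * Y) ≤ 4 * C * (Y - X) := by
    rcases le_or_gt y (2 * x) with hcase | hcase
    · -- x ≥ y/2 : AM-GM tangent bound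
      have hAM : (x / y) ^ (1 - α) * 1 ^ α ≤ (1 - α) * (x / y) + α * 1 :=
        Real.geom_mean_le_arith_mean2_weighted hβ0.le hα0.le
          (le_of_lt (div_pos hx hy)) zero_le_one (by ring)
      rw [Real.one_rpow, mul_one, mul_one] at hAM
      have hX_eq : X = (x / y) ^ (1 - α) * Y := by
        rw [hXdef, hYdef, Real.div_rpow hx.le hy.le, div_mul_cancel₀]
        exact (Real.rpow_pos_of_pos hy _).ne'
      have hXY' : X * y ≤ Y * ((1 - α) * x + α * y) :=
        calc X * y = (x / y) ^ (1 - α) * Y * y := by rw [hX_eq]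
          _ ≤ ((1 - α) * (x / y) + α) * (Y * y) := by
              rw [mul_assoc]
              exact mul_le_mul_of_nonneg_right hAM (by positivity)
          _ = Y * ((1 - α) * (x / y * y) + α * y) := by ring
          _ = Y * ((1 - α) * x + α * y) := by rw [div_mul_cancel₀ _ hy.ne']
      have h2 : X * x ≤ C * (y - x) := by
        have hxx : x ^ (2 - α) = X * x := by
          rw [hXdef, show (2 - α) = (1 - α) + 1 by ring, Real.rpow_add hx, Real.rpow_one]
        linarith [hxx ▸ h]
      -- multiply through: C * y * (Y - X) ≥ C * Y * (1-α) * (y-x) ≥ Y*(1-α)*X*x ≥ Y*(1-α)*X*(y/2)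
      nlinarith [mul_le_mul_of_nonneg_left h2 (mul_nonneg hY0.le hβ0.le),
        mul_le_mul_of_nonneg_left hXY' hC0.le,
        mul_pos hX0 hY0, mul_pos hy hC0, sq_nonneg (Y - X), hy.le,
        mul_nonneg (mul_nonneg hY0.le hβ0.le) hX0.le]
    · -- x < y/2 : crude jump
      set D := (2:ℝ) ^ (1 - α) with hDdef
      have hD2 : D ≤ 2 := by
        calc D ≤ 2 ^ (1:ℝ) := Real.rpow_le_rpow_of_exponent_le one_le_two (by linarith)
          _ = 2 := Real.rpow_one 2
      have hD1 : 1 + (1 - α) / 2 ≤ D := by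
        have hD_eq : D = Real.exp (Real.log 2 * (1 - α)) := by
          rw [hDdef, Real.rpow_def_of_pos two_pos]
        have hlog : Real.log 2 * (1 - α) + 1 ≤ D := by
          rw [hD_eq]; exact Real.add_one_le_exp _
        have hl2 : (0.6931471803 : ℝ) < Real.log 2 := Real.log_two_gt_d9
        nlinarith [hlog, hl2, hβ0]
      have hXD : X * D ≤ Y := by
        have : X ≤ (y / 2) ^ (1 - α) :=
          Real.rpow_le_rpow hx.le (by linarith) hβ0.le
        have h2' : (y / 2) ^ (1 - α) = Y / D := by
          rw [hYdef, hDdef, Real.div_rpow hy.le (by norm_num)]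
        rw [h2'] at this
        calc X * D ≤ Y / D * D := by
              exact mul_le_mul_of_nonneg_right this (by positivity)
          _ = Y := by rw [div_mul_cancel₀ Y (by rw [hDdef]; positivity)]
      nlinarith [mul_le_mul_of_nonneg_left hD1 hX0.le, hXD,
        mul_nonneg (mul_nonneg hβ0.le hX0.le) (sub_nonneg.2 hY1),
        mul_nonneg (sub_nonneg.2 hC) (sub_nonneg.2 hXY)]
  -- conclude
  have hxe : x ^ (α - 1) = X⁻¹ := by
    rw [hXdef, show (α - 1 : ℝ) = -(1 - α) by ring, Real.rpow_neg hx.le]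
  have hye : y ^ (α - 1) = Y⁻¹ := by
    rw [hYdef, show (α - 1 : ℝ) = -(1 - α) by ring, Real.rpow_neg hy.le]
  rw [hxe, hye]
  have hfrac : (1 - α) / (4 * C) ≤ (Y - X) / (X * Y) := by
    rw [div_le_div_iff₀ (by positivity) (by positivity)]
    nlinarith [key]
  have heq : (Y - X) / (X * Y) = X⁻¹ - Y⁻¹ := by field_simp
  linarith [heq ▸ hfrac]

end DiniAux

namespace DiniAux2
open DiniAux

lemma ann_measurable (a b : ℝ) : MeasurableSet {t : ℝ | a ≤ |t| ∧ |t| ≤ b} := by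
  have : {t : ℝ | a ≤ |t| ∧ |t| ≤ b} = (fun t : ℝ => |t|) ⁻¹' (Set.Icc a b) := by
    ext t; simp [Set.mem_Icc]
  rw [this]
  exact (measurable_id.abs) measurableSet_Icc

lemma ann_volume {a b : ℝ} (ha : 0 ≤ a) (hab : a ≤ b) :
    volume {t : ℝ | a ≤ |t| ∧ |t| ≤ b} ≤ ENNReal.ofReal (2 * (b - a)) := by
  have hsub : {t : ℝ | a ≤ |t| ∧ |t| ≤ b} ⊆ Set.Icc (-b) (-a) ∪ Set.Icc a b := by
    intro t ⟨h1, h2⟩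
    rcases le_total 0 t with ht | ht
    · right; rw [abs_of_nonneg ht] at h1 h2; exact ⟨h1, h2⟩
    · left; rw [abs_of_nonpos ht] at h1 h2; constructor <;> linarith
  calc volume {t : ℝ | a ≤ |t| ∧ |t| ≤ b}
      ≤ volume (Set.Icc (-b) (-a)) + volume (Set.Icc a b) :=
        le_trans (measure_mono hsub) (measure_union_le _ _)
    _ = ENNReal.ofReal (b - a) + ENNReal.ofReal (b - a) := by
        rw [Real.volume_Icc, Real.volume_Icc, show -a - -b = b - a by ring]
    _ = ENNReal.ofReal (2 * (b - a)) := by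
        rw [← ENNReal.ofReal_add (by linarith) (by linarith)]; congr 1; ring

/-- Cauchy–Schwarz estimate on an annulus. -/
lemma annulus_est {T : ℝ} {I : ℝ → ℝ} {f : ℝ → ℝ} (hf : Measurable f) (hf0 : ∀ t, 0 ≤ f t)
    (hf2 : ∀ a b : ℝ, 0 ≤ a → a ≤ b → b ≤ T →
      ∫⁻ t in {t : ℝ | a ≤ |t| ∧ |t| ≤ b}, ENNReal.ofReal ((f t) ^ 2)
        ≤ ENNReal.ofReal (I b - I a))
    {a b w M : ℝ} (ha : 0 ≤ a) (hab : a ≤ b) (hbT : b ≤ T)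
    (hw : b - a ≤ w) (hM : I b - I a ≤ M) (hM0 : 0 ≤ M) :
    ∫⁻ t in {t : ℝ | a ≤ |t| ∧ |t| ≤ b}, ENNReal.ofReal (f t)
      ≤ ENNReal.ofReal ((2 * w) ^ (1/2 : ℝ) * M ^ (1/2 : ℝ)) := by
  set A := {t : ℝ | a ≤ |t| ∧ |t| ≤ b} with hA
  set μ := volume.restrict A with hμ
  have hconj : Real.HolderConjugate 2 2 := Real.holderConjugate_iff.mpr ⟨by norm_num, by norm_num⟩
  have hg : AEMeasurable (fun t => ENNReal.ofReal (f t)) μ :=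
    (hf.ennreal_ofReal).aemeasurable
  have H := ENNReal.lintegral_mul_le_Lp_mul_Lq μ hconj hg
    (aemeasurable_const : AEMeasurable (fun _ : ℝ => (1:ℝ≥0∞)) μ)
  simp only [Pi.mul_apply, mul_one, ENNReal.one_rpow, lintegral_const,
    Measure.restrict_apply_univ] at H
  have hsq : ∀ t, ENNReal.ofReal (f t) ^ (2:ℝ) = ENNReal.ofReal ((f t) ^ 2) := by
    intro t
    rw [ENNReal.ofReal_rpow_of_nonneg (hf0 t) (by norm_num),
      show ((2:ℝ)) = ((2:ℕ):ℝ) by norm_num, Real.rpow_natCast]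
  calc ∫⁻ t in A, ENNReal.ofReal (f t)
      ≤ (∫⁻ t, ENNReal.ofReal (f t) ^ (2:ℝ) ∂μ) ^ (1/2 : ℝ) * (μ Set.univ * 1) ^ (1/2 : ℝ) := by
        simpa using H
    _ ≤ (ENNReal.ofReal M) ^ (1/2 : ℝ) * (ENNReal.ofReal (2 * w)) ^ (1/2 : ℝ) := by
        apply mul_le_mul'
        · apply ENNReal.rpow_le_rpow _ (by norm_num)
          calc ∫⁻ t, ENNReal.ofReal (f t) ^ (2:ℝ) ∂μ
              = ∫⁻ t in A, ENNReal.ofReal ((f t) ^ 2) := by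
                rw [hμ]; exact lintegral_congr fun t => hsq t
            _ ≤ ENNReal.ofReal (I b - I a) := hf2 a b ha hab hbT
            _ ≤ ENNReal.ofReal M := ENNReal.ofReal_le_ofReal hM
        · apply ENNReal.rpow_le_rpow _ (by norm_num)
          rw [mul_one, hμ, Measure.restrict_apply_univ]
          exact le_trans (ann_volume ha hab)
            (ENNReal.ofReal_le_ofReal (by linarith))
    _ = ENNReal.ofReal ((2 * w) ^ (1/2 : ℝ) * M ^ (1/2 : ℝ)) := by
        rw [ENNReal.ofReal_rpow_of_nonneg hM0 (by norm_num),
          ENNReal.ofReal_rpow_of_nonneg (by linarith : (0:ℝ) ≤ 2 * w) (by norm_num),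
          ← ENNReal.ofReal_mul (by positivity), mul_comm]

end DiniAux2

namespace DiniAux3
open DiniAux DiniAux2

/-- Covering `[-T,T]` by annuli determined by the scale sequence `s`. -/
lemma glue {T : ℝ} (hT : 0 < T) {F : ℝ → ℝ≥0∞} {s : ℕ → ℝ} (hs0 : s 0 = 0)
    (hsmono : Monotone s) (hsbig : ∃ N, T ≤ s N) {D : ℕ → ℝ≥0∞}
    (hD : ∀ j, ∫⁻ t in {t : ℝ | max (T - s (j+1)) 0 ≤ |t| ∧ |t| ≤ max (T - s j) 0}, F t
      ≤ D j) :
    ∫⁻ t in Set.Icc (-T) T, F t ≤ ∑' j, D j := by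
  classical
  set r : ℕ → ℝ := fun j => max (T - s j) 0 with hr
  have hrmono : ∀ j, r (j+1) ≤ r j := fun j =>
    max_le_max (sub_le_sub_left (hsmono (Nat.le_succ j)) T) le_rfl
  have hcover : Set.Icc (-T) T ⊆ ⋃ j, {t : ℝ | r (j+1) ≤ |t| ∧ |t| ≤ r j} := by
    intro t ht
    have habs : |t| ≤ T := abs_le.2 ⟨ht.1, ht.2⟩
    have hex : ∃ j, r j ≤ |t| := by
      obtain ⟨N, hN⟩ := hsbig
      exact ⟨N, by simp only [hr]; rw [max_eq_right (by linarith)]; exact abs_nonneg t⟩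
    have hspec : r (Nat.find hex) ≤ |t| := Nat.find_spec hex
    cases h0 : Nat.find hex with
    | zero =>
      rw [h0] at hspec
      refine Set.mem_iUnion.2 ⟨0, le_trans (hrmono 0) hspec, ?_⟩
      show |t| ≤ r 0
      simp only [hr, hs0, sub_zero]
      rw [max_eq_left (by linarith)]; exact habs
    | succ m =>
      rw [h0] at hspec
      have hmin : ¬ r m ≤ |t| := Nat.find_min hex (by omega)
      exact Set.mem_iUnion.2 ⟨m, hspec, le_of_not_ge hmin⟩
  calc ∫⁻ t in Set.Icc (-T) T, F t
      ≤ ∫⁻ t in ⋃ j, {t : ℝ | r (j+1) ≤ |t| ∧ |t| ≤ r j}, F t := lintegral_mono_set hcover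
    _ ≤ ∑' j, ∫⁻ t in {t : ℝ | r (j+1) ≤ |t| ∧ |t| ≤ r j}, F t := lintegral_iUnion_le _ _
    _ ≤ ∑' j, D j := ENNReal.tsum_le_tsum hD

lemma tsum_geom {c ρ : ℝ} (hc : 0 ≤ c) (hρ0 : 0 ≤ ρ) (hρ1 : ρ < 1) :
    ∑' j : ℕ, ENNReal.ofReal (c * ρ ^ j) ≤ ENNReal.ofReal (c * (1 - ρ)⁻¹) := by
  have h1 : ∀ j : ℕ, ENNReal.ofReal (c * ρ ^ j)
      = ENNReal.ofReal c * ENNReal.ofReal ρ ^ j := by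
    intro j
    rw [ENNReal.ofReal_mul hc, ENNReal.ofReal_pow hρ0]
  calc ∑' j : ℕ, ENNReal.ofReal (c * ρ ^ j)
      = ENNReal.ofReal c * ∑' j : ℕ, ENNReal.ofReal ρ ^ j := by
        rw [← ENNReal.tsum_mul_left]; exact tsum_congr h1
    _ = ENNReal.ofReal c * (1 - ENNReal.ofReal ρ)⁻¹ := by rw [ENNReal.tsum_geometric]
    _ = ENNReal.ofReal (c * (1 - ρ)⁻¹) := by
        rw [ENNReal.ofReal_mul hc, ENNReal.ofReal_inv_of_pos (by linarith),
          ENNReal.ofReal_sub 1 hρ0, ENNReal.ofReal_one]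
    _ ≤ ENNReal.ofReal (c * (1 - ρ)⁻¹) := le_rfl

lemma zero_case {f : ℝ → ℝ} (hf : Measurable f) {T : ℝ} (hT : 0 ≤ T)
    (h : ∫⁻ t in {t : ℝ | 0 ≤ |t| ∧ |t| ≤ T}, ENNReal.ofReal ((f t) ^ 2) = 0) :
    ∫⁻ t in Set.Icc (-T) T, ENNReal.ofReal (f t) = 0 := by
  have hset : Set.Icc (-T) T = {t : ℝ | 0 ≤ |t| ∧ |t| ≤ T} := by
    ext t; simp [Set.mem_Icc, abs_le, abs_nonneg]
  rw [hset]
  rw [lintegral_eq_zero_iff ((hf.pow measurable_const).ennreal_ofReal)] at h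
  rw [lintegral_eq_zero_iff (hf.ennreal_ofReal)]
  refine h.mono fun t ht => ?_
  simp only [Pi.zero_apply, ENNReal.ofReal_eq_zero] at ht ⊢
  nlinarith [sq_nonneg (f t), sq_abs (f t)]

end DiniAux3

namespace DiniAux4
open DiniAux DiniAux2 DiniAux3

lemma Xle_aux {c₀ L P k : ℝ} (hc₀0 : 0 < c₀) (hc₀1 : c₀ ≤ 1/4) (hL1 : 1 ≤ L) (hP : 0 < P)
    (hk : (2*P - 1) * L - 1 < k) : c₀ * P * L ≤ L + k * c₀ := by
  have h5 : c₀ * ((2 * P - 1) * L - 1) ≤ c₀ * k := mul_le_mul_of_nonneg_left hk.le hc₀0.le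
  nlinarith [h5, mul_nonneg (mul_nonneg hc₀0.le hP.le) (by linarith : (0:ℝ) ≤ L),
    mul_nonneg (sub_nonneg.2 hL1) (by linarith : (0:ℝ) ≤ 1 - c₀)]

lemma max0_sub_le {x y : ℝ} (h : y ≤ x) : max x 0 - max y 0 ≤ x - y := by
  rcases le_total x 0 with hx | hx <;> rcases le_total y 0 with hy | hy <;>
    simp [max_eq_left, max_eq_right, hx, hy] <;> linarith

lemma decay_lt_one {α C T : ℝ} {I : ℝ → ℝ} (hα0 : 0 < α) (hα1 : α < 1) (hC : 1 ≤ C)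
    (hT : 1 ≤ T) (hmono : Monotone I)
    (hbd : ∀ t ∈ Set.Icc (0:ℝ) T, 0 ≤ I t ∧ I t ≤ 1)
    (hrec : ∀ t ∈ Set.Ioc (0:ℝ) (T-1), I t ^ (2-α) ≤ C * (I (t+1) - I t)) :
    ∀ k : ℕ, 0 < T - k → I (T - k) ≤ 0 ∨
      (0 < I (T - k) ∧ (I T) ^ (α-1) + k * ((1-α)/(4*C)) ≤ (I (T - k)) ^ (α-1)) := by
  intro k
  induction k with
  | zero =>
    intro _
    rcases le_or_gt (I (T - (0:ℕ))) 0 with h | h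
    · exact Or.inl h
    · refine Or.inr ⟨h, ?_⟩
      push_cast
      simp only [sub_zero]
      linarith
  | succ k IH =>
    intro hk1
    have hc : ((k+1:ℕ):ℝ) = (k:ℝ)+1 := by push_cast; ring
    rw [hc] at hk1 ⊢
    have hk : 0 < T - k := by linarith
    rcases le_or_gt (I (T - ((k:ℝ)+1))) 0 with h | hx
    · exact Or.inl h
    set t := T - ((k:ℝ)+1) with ht
    have hrec' := hrec t ⟨hk1, by simp only [ht]; linarith⟩
    have ht1 : t + 1 = T - (k:ℝ) := by rw [ht]; ring
    rw [ht1] at hrec'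
    have hxy : I t ≤ I (T - (k:ℝ)) := hmono (by rw [ht]; linarith)
    have hk0 : (0:ℝ) ≤ (k:ℝ) := Nat.cast_nonneg k
    have hbd' := hbd (T - (k:ℝ)) ⟨by linarith, by linarith⟩
    rcases IH hk with h0 | ⟨hy, hIH⟩
    · linarith
    have hstep := step_ineq hα0 hα1 hC hx hxy hbd'.2 hrec'
    refine Or.inr ⟨hx, ?_⟩
    push_cast
    linarith

lemma decay_eq_one {C T : ℝ} {I : ℝ → ℝ} (hC : 1 ≤ C) (hT : 1 ≤ T) (hmono : Monotone I)
    (hbd : ∀ t ∈ Set.Icc (0:ℝ) T, 0 ≤ I t ∧ I t ≤ 1)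
    (hrec : ∀ t ∈ Set.Ioc (0:ℝ) (T-1), I t ≤ C * (I (t+1) - I t)) :
    ∀ k : ℕ, 0 < T - k → I (T - k) ≤ (C/(C+1))^k * I T := by
  intro k
  have hC0 : 0 < C := lt_of_lt_of_le one_pos hC
  have hC1 : 0 < C + 1 := by linarith
  induction k with
  | zero => intro _; push_cast; simp
  | succ k IH =>
    intro hk1
    have hc : ((k+1:ℕ):ℝ) = (k:ℝ)+1 := by push_cast; ring
    rw [hc] at hk1 ⊢
    have hk : 0 < T - k := by linarith
    set t := T - ((k:ℝ)+1) with ht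
    have hrec' := hrec t ⟨hk1, by simp only [ht]; linarith⟩
    have ht1 : t + 1 = T - (k:ℝ) := by rw [ht]; ring
    rw [ht1] at hrec'
    have hstep : I t ≤ C/(C+1) * I (T - (k:ℝ)) := by
      rw [div_mul_eq_mul_div, le_div_iff₀ hC1]
      linarith
    calc I t ≤ C/(C+1) * I (T - (k:ℝ)) := hstep
      _ ≤ C/(C+1) * ((C/(C+1))^k * I T) :=
          mul_le_mul_of_nonneg_left (IH hk) (by positivity)
      _ = (C/(C+1))^(k+1) * I T := by ring

end DiniAux4

open DiniAux DiniAux2 DiniAux3 DiniAux4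

/-- Abstract Dini-type estimate: for `α ∈ (0,1]` and `C ≥ 1` there is
`C' > 0` such that for all `T ≥ 1`, if `I` is nondecreasing with `0 ≤ I ≤ 1` on
`[0,T]` and satisfies `I(t)^{2-α} ≤ C (I(t+1) - I(t))` on `(0, T-1]`, and if
`f ≥ 0` is measurable with `∫_{a ≤ |t| ≤ b} f² ≤ I(b) - I(a)` for all
`0 ≤ a ≤ b ≤ T`, then `∫_{-T}^{T} f ≤ C' I(T)^{α/2}`. -/
theorem dini_type_estimate (α C : ℝ) (hα : α ∈ Set.Ioc (0 : ℝ) 1) (hC : 1 ≤ C) :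
    ∃ C' > (0 : ℝ), ∀ T : ℝ, 1 ≤ T →
      ∀ I : ℝ → ℝ, Monotone I →
        (∀ t ∈ Set.Icc (0 : ℝ) T, 0 ≤ I t ∧ I t ≤ 1) →
        (∀ t ∈ Set.Ioc (0 : ℝ) (T - 1), I t ^ (2 - α) ≤ C * (I (t + 1) - I t)) →
        ∀ f : ℝ → ℝ, Measurable f → (∀ t, 0 ≤ f t) →
          (∀ a b : ℝ, 0 ≤ a → a ≤ b → b ≤ T →
            ∫⁻ t in {t : ℝ | a ≤ |t| ∧ |t| ≤ b}, ENNReal.ofReal ((f t) ^ 2)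
              ≤ ENNReal.ofReal (I b - I a)) →
          ∫⁻ t in Set.Icc (-T) T, ENNReal.ofReal (f t)
            ≤ ENNReal.ofReal (C' * I T ^ (α / 2)) := by
  obtain ⟨hα0, hα1⟩ := hα
  have hC0 : 0 < C := lt_of_lt_of_le one_pos hC
  rcases lt_or_eq_of_le hα1 with hαlt | hαe
  · -- case α < 1
    have hβ0 : (0:ℝ) < 1 - α := by linarith
    have hβ1 : (1:ℝ) < (1-α)⁻¹ := by
      rw [lt_inv_comm₀ one_pos hβ0]; simp; linarith
    set c₀ := (1-α)/(4*C) with hc₀def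
    have hc₀0 : 0 < c₀ := by positivity
    have hc₀1 : c₀ ≤ 1/4 := by
      rw [hc₀def, div_le_div_iff₀ (by positivity) (by norm_num)]
      nlinarith
    set e := (1-α)⁻¹ * (1/2:ℝ) with hedef
    have he0 : 0 < e := by positivity
    have he2 : 1/2 < e := by rw [hedef]; nlinarith
    set ρ := (2:ℝ) ^ (1/2 - e) with hρdef
    have hρpos : 0 < ρ := Real.rpow_pos_of_pos two_pos _
    have hρ1 : ρ < 1 := Real.rpow_lt_one_of_one_lt_of_neg one_lt_two (by linarith)
    set K := c₀ ^ (-e) * (2:ℝ) ^ (1/2 + e) with hKdef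
    have hK0 : 0 < K := mul_pos (Real.rpow_pos_of_pos hc₀0 _) (Real.rpow_pos_of_pos two_pos _)
    refine ⟨K * (1 - ρ)⁻¹, mul_pos hK0 (inv_pos.2 (by linarith)), ?_⟩
    intro T hT I hImono hIbd hIrec f hf hf0 hf2
    have hT0 : (0:ℝ) < T := by linarith
    set J := I T with hJdef
    have hJbd := hIbd T ⟨hT0.le, le_rfl⟩
    have hJ0 : 0 ≤ J := hJbd.1
    have hJ1 : J ≤ 1 := hJbd.2
    rcases eq_or_lt_of_le hJ0 with hJz | hJpos
    · -- I T = 0 : everything vanishes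
      have hI00 : 0 ≤ I 0 := (hIbd 0 ⟨le_rfl, hT0.le⟩).1
      have hz : ∫⁻ t in {t : ℝ | 0 ≤ |t| ∧ |t| ≤ T}, ENNReal.ofReal ((f t) ^ 2) = 0 := by
        refine le_antisymm (le_trans (hf2 0 T le_rfl hT0.le le_rfl) ?_) (zero_le)
        rw [ENNReal.ofReal_of_nonpos (by linarith)]
      rw [zero_case hf hT0.le hz]
      exact zero_le
    · -- main case
      set L := J ^ (α - 1) with hLdef
      have hL0 : 0 < L := Real.rpow_pos_of_pos hJpos _
      have hL1 : 1 ≤ L :=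
        Real.one_le_rpow_of_pos_of_le_one_of_nonpos hJpos hJ1 (by linarith)
      have hdecay := decay_lt_one hα0 hαlt hC hT hImono hIbd hIrec
      set c := K * J ^ (α/2) with hcdef
      have hc0 : 0 ≤ c := by positivity
      have hglue := glue (F := fun t => ENNReal.ofReal (f t)) hT0
        (s := fun j : ℕ => ((2:ℝ)^j - 1) * L) ?_ ?_ ?_
        (D := fun j => ENNReal.ofReal (c * ρ^j)) ?_
      · refine le_trans hglue (le_trans (tsum_geom hc0 hρpos.le hρ1) ?_)
        exact ENNReal.ofReal_le_ofReal (le_of_eq (by rw [hcdef]; ring))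
      · simp
      · intro u v huv
        show ((2:ℝ)^u - 1) * L ≤ ((2:ℝ)^v - 1) * L
        have : (2:ℝ)^u ≤ (2:ℝ)^v := pow_le_pow_right₀ one_le_two huv
        nlinarith
      · obtain ⟨N, hN⟩ := exists_nat_ge T
        refine ⟨N, ?_⟩
        have h2N : (N:ℝ) + 1 ≤ (2:ℝ)^N := by
          exact_mod_cast (Nat.lt_two_pow_self : N < 2 ^ N)
        show T ≤ ((2:ℝ)^N - 1) * L
        nlinarith
      · intro j
        show ∫⁻ t in {t : ℝ | max (T - ((2:ℝ)^(j+1) - 1) * L) 0 ≤ |t| ∧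
              |t| ≤ max (T - ((2:ℝ)^j - 1) * L) 0},
            ENNReal.ofReal (f t) ≤ ENNReal.ofReal (c * ρ^j)
        have h2j : (1:ℝ) ≤ (2:ℝ)^j := one_le_pow₀ one_le_two
        have hpowj : (2:ℝ)^(j+1) = 2 * (2:ℝ)^j := by ring
        have hsj0 : 0 ≤ ((2:ℝ)^j - 1) * L := mul_nonneg (by linarith) hL0.le
        have hsj1 : ((2:ℝ)^j - 1) * L ≤ ((2:ℝ)^(j+1) - 1) * L :=
          mul_le_mul_of_nonneg_right (by rw [hpowj]; linarith) hL0.le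
        rcases le_or_gt (T - ((2:ℝ)^j - 1) * L) 0 with hTj | hTj
        · -- degenerate annulus
          have hb : max (T - ((2:ℝ)^j - 1) * L) 0 = 0 := max_eq_right hTj
          have ha : max (T - ((2:ℝ)^(j+1) - 1) * L) 0 = 0 := max_eq_right (by linarith)
          have hnull : volume {t : ℝ | max (T - ((2:ℝ)^(j+1) - 1) * L) 0 ≤ |t| ∧
              |t| ≤ max (T - ((2:ℝ)^j - 1) * L) 0} = 0 := by
            rw [ha, hb,
              show {t : ℝ | (0:ℝ) ≤ |t| ∧ |t| ≤ 0} = {(0:ℝ)} from by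
                ext t; simp [abs_nonneg, abs_nonpos_iff],
              Real.volume_singleton]
          rw [setLIntegral_measure_zero _ _ hnull]
          exact zero_le
        · -- genuine annulus
          have hbeq : max (T - ((2:ℝ)^j - 1) * L) 0 = T - ((2:ℝ)^j - 1) * L :=
            max_eq_left hTj.le
          have hbT : max (T - ((2:ℝ)^j - 1) * L) 0 ≤ T := by rw [hbeq]; linarith
          have hab : max (T - ((2:ℝ)^(j+1) - 1) * L) 0 ≤ max (T - ((2:ℝ)^j - 1) * L) 0 :=
            max_le_max (by linarith) le_rfl
          have hIa0 : 0 ≤ I (max (T - ((2:ℝ)^(j+1) - 1) * L) 0) :=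
            (hIbd _ ⟨le_max_right _ _, le_trans hab hbT⟩).1
          have hwidth : max (T - ((2:ℝ)^j - 1) * L) 0 - max (T - ((2:ℝ)^(j+1) - 1) * L) 0
              ≤ (2:ℝ)^j * L := by
            have h6 := max0_sub_le (x := T - ((2:ℝ)^j - 1) * L)
              (y := T - ((2:ℝ)^(j+1) - 1) * L) (by linarith)
            have h7 : ((2:ℝ)^(j+1) - 1) * L - ((2:ℝ)^j - 1) * L = (2:ℝ)^j * L := by ring
            linarith
          -- floor point
          set k := ⌊((2:ℝ)^j - 1) * L⌋₊ with hkdef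
          have hk_le : (k:ℝ) ≤ ((2:ℝ)^j - 1) * L := Nat.floor_le hsj0
          have hk_gt : ((2:ℝ)^j - 1) * L - 1 < (k:ℝ) := Nat.sub_one_lt_floor _
          have hTk : 0 < T - (k:ℝ) := by linarith
          have hIbk : I (max (T - ((2:ℝ)^j - 1) * L) 0) ≤ I (T - (k:ℝ)) := by
            rw [hbeq]; exact hImono (by linarith)
          cases j with
          | zero =>
            -- first annulus : use M = J
            have hIbJ : I (max (T - ((2:ℝ)^0 - 1) * L) 0) ≤ J := by
              rw [hJdef]
              exact hImono hbT
            have hest := annulus_est (T := T) (I := I) hf hf0 hf2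
              (a := max (T - ((2:ℝ)^(0+1) - 1) * L) 0) (b := max (T - ((2:ℝ)^0 - 1) * L) 0)
              (w := (2:ℝ)^0 * L) (M := J)
              (le_max_right _ _) hab hbT hwidth (by linarith) hJ0
            refine le_trans hest (ENNReal.ofReal_le_ofReal ?_)
            rw [pow_zero, one_mul, pow_zero, mul_one]
            have hsplit : (2 * L) ^ (1/2:ℝ) * J ^ (1/2:ℝ) = (2:ℝ)^(1/2:ℝ) * J^(α/2) := by
              rw [Real.mul_rpow (by norm_num) hL0.le, hLdef,
                ← Real.rpow_mul hJ0, mul_assoc, ← Real.rpow_add hJpos]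
              congr 1
              congr 1
              ring
            rw [hsplit, hcdef]
            have h1 : (1:ℝ) ≤ c₀ ^ (-e) :=
              Real.one_le_rpow_of_pos_of_le_one_of_nonpos hc₀0 (by linarith) (by linarith)
            have h2 : (2:ℝ)^(1/2:ℝ) ≤ (2:ℝ)^(1/2+e) :=
              Real.rpow_le_rpow_of_exponent_le one_le_two (by linarith)
            have hK2 : (2:ℝ)^(1/2:ℝ) ≤ K := by
              rw [hKdef]
              calc (2:ℝ)^(1/2:ℝ) ≤ (2:ℝ)^(1/2+e) := h2
                _ ≤ c₀ ^ (-e) * (2:ℝ)^(1/2+e) :=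
                    le_mul_of_one_le_left (by positivity) h1
            exact mul_le_mul_of_nonneg_right hK2 (Real.rpow_nonneg hJ0 _)
          | succ i =>
            have h2i : (0:ℝ) < (2:ℝ)^i := by positivity
            set X := c₀ * (2:ℝ)^i * L with hXdef
            have hX0 : 0 < X := by positivity
            set M := (X⁻¹) ^ ((1-α)⁻¹:ℝ) with hMdef
            have hM0 : 0 ≤ M := Real.rpow_nonneg (inv_nonneg.2 hX0.le) _
            have hXle : X ≤ L + (k:ℝ) * c₀ := by
              rw [hXdef]
              rw [show ((2:ℝ)^(i+1)) = 2 * (2:ℝ)^i from by ring] at hk_gt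
              exact Xle_aux hc₀0 hc₀1 hL1 h2i hk_gt

            have hIbM : I (max (T - ((2:ℝ)^(i+1) - 1) * L) 0) ≤ M := by
              rcases hdecay k hTk with hneg | ⟨hpos, hbound⟩
              · exact le_trans hIbk (le_trans hneg hM0)
              · set y := I (T - (k:ℝ)) with hydef
                have hyX : X ≤ y ^ (α-1) := by
                  refine le_trans hXle ?_
                  rw [← hc₀def] at hbound
                  calc L + (k:ℝ) * c₀ = I T ^ (α-1) + (k:ℝ) * c₀ := by
                        rw [hLdef, hJdef]
                    _ ≤ y ^ (α-1) := hbound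
                have h1 : y ^ (α-1) = (y ^ (1-α))⁻¹ := by
                  rw [show α-1 = -(1-α) by ring, Real.rpow_neg hpos.le]
                have hy2 : y ^ (1-α) ≤ X⁻¹ := by
                  rw [h1] at hyX
                  exact (le_inv_comm₀ hX0 (Real.rpow_pos_of_pos hpos _)).mp hyX
                have hy3 : y ≤ M := by
                  have hid : y = (y ^ (1-α)) ^ ((1-α)⁻¹:ℝ) := by
                    rw [← Real.rpow_mul hpos.le, mul_inv_cancel₀ hβ0.ne', Real.rpow_one]
                  rw [hid, hMdef]
                  exact Real.rpow_le_rpow (Real.rpow_nonneg hpos.le _) hy2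
                    (by positivity)
                exact le_trans hIbk hy3
            have hest := annulus_est (T := T) (I := I) hf hf0 hf2
              (a := max (T - ((2:ℝ)^(i+1+1) - 1) * L) 0)
              (b := max (T - ((2:ℝ)^(i+1) - 1) * L) 0)
              (w := (2:ℝ)^(i+1) * L) (M := M)
              (le_max_right _ _) hab hbT hwidth (by linarith) hM0
            refine le_trans hest (ENNReal.ofReal_le_ofReal (le_of_eq ?_))
            -- the rpow bookkeeping, via logarithms
            have hA0 : (0:ℝ) < 2 * ((2:ℝ)^(i+1) * L) := by positivity
            have hXi0 : (0:ℝ) < X⁻¹ := inv_pos.2 hX0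
            have hMpos : (0:ℝ) < M := Real.rpow_pos_of_pos hXi0 _
            have hLpos : (0:ℝ) < (2 * ((2:ℝ)^(i+1) * L))^(1/2:ℝ) * M^(1/2:ℝ) := by positivity
            have hRpos : (0:ℝ) < c * ρ^(i+1) := by positivity
            apply Real.log_injOn_pos (Set.mem_Ioi.2 hLpos) (Set.mem_Ioi.2 hRpos)
            rw [Real.log_mul (ne_of_gt (Real.rpow_pos_of_pos hA0 _))
                (ne_of_gt (Real.rpow_pos_of_pos hMpos _)),
              Real.log_rpow hA0, Real.log_rpow hMpos, hMdef, Real.log_rpow hXi0,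
              Real.log_inv, hXdef,
              Real.log_mul (by positivity) (ne_of_gt hL0),
              Real.log_mul (ne_of_gt hc₀0) (ne_of_gt h2i),
              Real.log_mul (by norm_num) (ne_of_gt (by positivity : (0:ℝ) < (2:ℝ)^(i+1) * L)),
              Real.log_mul (ne_of_gt (by positivity : (0:ℝ) < (2:ℝ)^(i+1))) (ne_of_gt hL0),
              hLdef, Real.log_rpow hJpos, Real.log_pow, Real.log_pow,
              hcdef, hKdef,
              Real.log_mul (ne_of_gt (mul_pos hK0 (Real.rpow_pos_of_pos hJpos _)))
                (ne_of_gt (by positivity : (0:ℝ) < ρ^(i+1))),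
              Real.log_mul (ne_of_gt (mul_pos (Real.rpow_pos_of_pos hc₀0 _)
                  (Real.rpow_pos_of_pos two_pos _)))
                (ne_of_gt (Real.rpow_pos_of_pos hJpos _)),
              Real.log_mul (ne_of_gt (Real.rpow_pos_of_pos hc₀0 _))
                (ne_of_gt (Real.rpow_pos_of_pos two_pos _)),
              Real.log_rpow hc₀0, Real.log_rpow two_pos, Real.log_rpow hJpos,
              Real.log_pow, hρdef, Real.log_rpow two_pos, hedef]
            push_cast
            field_simp
            ring
  · -- case α = 1
    subst hαe
    set θ := C / (C + 1) with hθdef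
    have hθ0 : 0 ≤ θ := by positivity
    have hθ1 : θ < 1 := by rw [hθdef, div_lt_one (by linarith)]; linarith
    set ρ := θ ^ (1/2 : ℝ) with hρdef
    have hρ0 : 0 ≤ ρ := Real.rpow_nonneg hθ0 _
    have hρ1 : ρ < 1 := Real.rpow_lt_one hθ0 hθ1 (by norm_num)
    refine ⟨(2:ℝ)^(1/2:ℝ) * (1 - ρ)⁻¹,
      mul_pos (Real.rpow_pos_of_pos two_pos _) (inv_pos.2 (by linarith)), ?_⟩
    intro T hT I hImono hIbd hIrec f hf hf0 hf2
    have hT0 : (0:ℝ) < T := by linarith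
    set J := I T with hJdef
    have hJbd := hIbd T ⟨hT0.le, le_rfl⟩
    have hJ0 : 0 ≤ J := hJbd.1
    have hIrec' : ∀ t ∈ Set.Ioc (0:ℝ) (T-1), I t ≤ C * (I (t+1) - I t) := by
      intro t ht
      have := hIrec t ht
      rwa [show (2:ℝ)-1 = 1 by norm_num, Real.rpow_one] at this
    have hdecay := decay_eq_one hC hT hImono hIbd hIrec'
    set c := (2:ℝ)^(1/2:ℝ) * J^(1/2:ℝ) with hcdef
    have hc0 : 0 ≤ c := by positivity
    have hglue := glue (F := fun t => ENNReal.ofReal (f t)) hT0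
      (s := fun j : ℕ => (j:ℝ)) (by norm_num)
      (fun _ _ h => Nat.cast_le.2 h) (exists_nat_ge T)
      (D := fun j => ENNReal.ofReal (c * ρ^j)) ?_
    · refine le_trans hglue (le_trans (tsum_geom hc0 hρ0 hρ1) ?_)
      apply ENNReal.ofReal_le_ofReal
      rw [hcdef]
      have : (1:ℝ)/2 = 1/2 := rfl
      calc (2:ℝ)^(1/2:ℝ) * J^(1/2:ℝ) * (1-ρ)⁻¹
          = (2:ℝ)^(1/2:ℝ) * (1-ρ)⁻¹ * J^(1/2:ℝ) := by ring
        _ ≤ (2:ℝ)^(1/2:ℝ) * (1-ρ)⁻¹ * I T ^ ((1:ℝ)/2) := le_of_eq (by rw [hJdef])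
    · -- per-annulus bound
      intro j
      have hj0 : (0:ℝ) ≤ (j:ℝ) := Nat.cast_nonneg j
      have hcast : ((j+1:ℕ):ℝ) = (j:ℝ)+1 := by push_cast; ring
      rcases le_or_gt (T - (j:ℝ)) 0 with hTj | hTj
      · -- degenerate annulus
        have hb : max (T - (j:ℝ)) 0 = 0 := max_eq_right hTj
        have ha : max (T - ((j+1:ℕ):ℝ)) 0 = 0 := max_eq_right (by rw [hcast]; linarith)
        have hnull : volume {t : ℝ | max (T - ((j+1:ℕ):ℝ)) 0 ≤ |t| ∧ |t| ≤ max (T - (j:ℝ)) 0} = 0 := by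
          rw [ha, hb]
          have : {t : ℝ | (0:ℝ) ≤ |t| ∧ |t| ≤ 0} = {(0:ℝ)} := by
            ext t; simp [abs_nonneg, abs_nonpos_iff]
          rw [this, Real.volume_singleton]
        rw [setLIntegral_measure_zero _ _ hnull]
        exact zero_le
      · -- genuine annulus
        have hbeq : max (T - (j:ℝ)) 0 = T - (j:ℝ) := max_eq_left hTj.le
        have hIb : I (max (T - (j:ℝ)) 0) ≤ θ^j * J := by
          rw [hbeq]; exact hdecay j hTj
        have hIa : 0 ≤ I (max (T - ((j+1:ℕ):ℝ)) 0) := by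
          refine (hIbd _ ⟨le_max_right _ _, ?_⟩).1
          apply max_le (by linarith) hT0.le
        have hest := annulus_est (T := T) (I := I) hf hf0 hf2
          (a := max (T - ((j+1:ℕ):ℝ)) 0) (b := max (T - (j:ℝ)) 0)
          (w := 1) (M := θ^j * J)
          (le_max_right _ _)
          (max_le_max (by rw [hcast]; linarith) le_rfl)
          (by rw [hbeq]; linarith)
          (by
            have := max0_sub_le (x := T - (j:ℝ)) (y := T - ((j+1:ℕ):ℝ)) (by rw [hcast]; linarith)
            rw [hcast] at this ⊢
            linarith)
          (by linarith [hIb, hIa])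
          (by positivity)
        refine le_trans hest (ENNReal.ofReal_le_ofReal (le_of_eq ?_))
        rw [mul_one, Real.mul_rpow (by positivity) hJ0,
          ← Real.rpow_natCast θ j, ← Real.rpow_mul hθ0, mul_comm ((j:ℝ)) (1/2:ℝ),
          Real.rpow_mul hθ0, ← hρdef, Real.rpow_natCast]
        ring
end

section
/- Let α ∈ (0,1) and C ≥ 1. There exists a constant C' = C'(α, C) > 0 such that the following holds. Let I : (0, 1/2] → ℝ be nondecreasing with 0 ≤ I(ρ) ≤ 1 for all ρ ∈ (0, 1/2], and suppose that I(ρ)^{2-α} ≤ C (I(2ρ) - I(ρ)) for all ρ ∈ (0, 1/4]. Then I(ρ) ≤ C' (log(1/ρ))^{-1/(1-α)} for all ρ ∈ (0, 1/4]. -/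
open Real Set

/-- One step of the iteration: the Łojasiewicz-type inequality forces a definite
increase of `x ↦ x ^ (-β)`. -/
private lemma rpow_step {β C x y : ℝ} (hβ0 : 0 < β) (hβ1 : β < 1) (hC : 1 ≤ C)
    (hx : 0 < x) (hxy : x ≤ y) (hy1 : y ≤ 1)
    (hrec : x ^ (1 + β) ≤ C * (y - x)) :
    y ^ (-β) + min (β / (2 * C)) (2 ^ β - 1) ≤ x ^ (-β) := by
  have hy : 0 < y := lt_of_lt_of_le hx hxy
  have hC0 : 0 < C := lt_of_lt_of_le one_pos hC
  have hX : 0 < x ^ (-β) := rpow_pos_of_pos hx _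
  by_cases h2 : y ≤ 2 * x
  · -- case `y ≤ 2x`
    refine le_trans (add_le_add le_rfl (min_le_left _ _)) ?_
    have ht0 : 0 < x / y := div_pos hx hy
    have ht1 : x / y ≤ 1 := div_le_one_of_le₀ hxy hy.le
    have hber : (x / y) ^ β ≤ β * (x / y) + (1 - β) := by
      have := Real.geom_mean_le_arith_mean2_weighted hβ0.le (by linarith : (0:ℝ) ≤ 1 - β)
        ht0.le zero_le_one (by ring)
      simpa using this
    have hXsplit : x ^ (-β) * x ^ (1 + β) = x := by
      rw [← Real.rpow_add hx, ← Real.rpow_one x]; norm_num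
    have hyx : y ^ (-β) = x ^ (-β) * (x / y) ^ β := by
      rw [Real.div_rpow hx.le hy.le, Real.rpow_neg hx.le, Real.rpow_neg hy.le]
      field_simp
    have h1t : x ^ (1 + β) / (C * y) ≤ 1 - x / y := by
      rw [div_le_iff₀ (by positivity)]
      have : x ^ (1 + β) ≤ C * (y - x) := hrec
      have hxy' : (1 - x / y) * (C * y) = C * (y - x) := by field_simp
      linarith [hxy'.symm ▸ this]
    -- x^{-β} - y^{-β} = X (1 - t^β) ≥ X β (1 - t) ≥ β X x^{1+β}/(C y) = β x/(Cy) ≥ β/(2C)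
    have key : β / (2 * C) ≤ x ^ (-β) * (1 - (x / y) ^ β) := by
      have s1 : β * (1 - x / y) ≤ 1 - (x / y) ^ β := by nlinarith
      have s2 : β * (x ^ (1 + β) / (C * y)) ≤ β * (1 - x / y) :=
        mul_le_mul_of_nonneg_left h1t hβ0.le
      have s3 : x ^ (-β) * (β * (x ^ (1 + β) / (C * y))) ≤ x ^ (-β) * (1 - (x / y) ^ β) := by
        apply mul_le_mul_of_nonneg_left _ hX.le
        exact le_trans s2 s1
      have s4 : x ^ (-β) * (β * (x ^ (1 + β) / (C * y))) = β * (x / (C * y)) := by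
        field_simp
        nlinarith [hXsplit]
      rw [s4] at s3
      refine le_trans ?_ s3
      have hr : 1 / (2 * C) ≤ x / (C * y) := by
        rw [div_le_div_iff₀ (by positivity) (by positivity)]
        nlinarith
      calc β / (2 * C) = β * (1 / (2 * C)) := by ring
        _ ≤ β * (x / (C * y)) := mul_le_mul_of_nonneg_left hr hβ0.le
    rw [hyx]; nlinarith [key]
  · -- case `y > 2x`
    refine le_trans (add_le_add le_rfl (min_le_right _ _)) ?_
    push_neg at h2
    have hY1 : (1:ℝ) ≤ y ^ (-β) :=
      Real.one_le_rpow_of_pos_of_le_one_of_nonpos hy hy1 (by linarith)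
    have h2b : (1:ℝ) ≤ 2 ^ β := Real.one_le_rpow one_le_two hβ0.le
    have step : y ^ (-β) * 2 ^ β ≤ x ^ (-β) := by
      have hx2 : x ≤ y / 2 := by linarith
      have : (y / 2) ^ (-β) ≤ x ^ (-β) :=
        Real.rpow_le_rpow_of_nonpos hx hx2 (by linarith)
      refine le_trans (le_of_eq ?_) this
      rw [Real.div_rpow hy.le (by norm_num), Real.rpow_neg hy.le, Real.rpow_neg (by norm_num : (0:ℝ) ≤ 2)]
      field_simp
    nlinarith [step, hY1, h2b]

/-- Discrete iteration lemma. -/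
private lemma seq_bound {β C : ℝ} (hβ0 : 0 < β) (hβ1 : β < 1) (hC : 1 ≤ C)
    (a : ℕ → ℝ) (h0 : ∀ k, 0 ≤ a k) (h1 : ∀ k, a k ≤ 1)
    (hmono : ∀ k, a (k + 1) ≤ a k)
    (hrec : ∀ k, a (k + 1) ^ (1 + β) ≤ C * (a k - a (k + 1))) :
    ∀ k : ℕ, a k ≤ (1 + min (β / (2 * C)) (2 ^ β - 1) * k) ^ (-(1 / β)) := by
  set c := min (β / (2 * C)) (2 ^ β - 1) with hc
  have hC0 : 0 < C := lt_of_lt_of_le one_pos hC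
  have hc0 : 0 < c := by
    apply lt_min (by positivity)
    have : (1:ℝ) < 2 ^ β := Real.one_lt_rpow_iff_of_pos (by norm_num) |>.2 (Or.inl ⟨by norm_num, hβ0⟩)
    linarith
  have key : ∀ k : ℕ, 0 < a k → 1 + c * k ≤ a k ^ (-β) := by
    intro k
    induction k with
    | zero =>
      intro hpos
      simpa using Real.one_le_rpow_of_pos_of_le_one_of_nonpos hpos (h1 0) (by linarith)
    | succ n ih =>
      intro hpos
      have hposn : 0 < a n := lt_of_lt_of_le hpos (hmono n)
      have := rpow_step hβ0 hβ1 hC hpos (hmono n) (h1 n) (hrec n)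
      have ihn := ih hposn
      push_cast
      rw [← hc] at this
      linarith
  intro k
  have hpos1 : (0:ℝ) < 1 + c * k := by positivity
  rcases (h0 k).eq_or_lt with h | h
  · rw [← h]
    exact (Real.rpow_pos_of_pos hpos1 _).le
  · have hk := key k h
    have hmul : (-β) * (-(1 / β)) = 1 := by field_simp
    have : (a k ^ (-β)) ^ (-(1 / β)) ≤ (1 + c * k) ^ (-(1 / β)) :=
      Real.rpow_le_rpow_of_nonpos hpos1 hk (neg_nonpos.mpr (by positivity))
    rwa [← Real.rpow_mul h.le, hmul, Real.rpow_one] at this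

/-- Iteration lemma (non-integrable case): for `α ∈ (0,1)` and `C ≥ 1` there is
`C' > 0` such that if `I` is nondecreasing on `(0, 1/2]` with `0 ≤ I ≤ 1` there
and `I(ρ)^{2-α} ≤ C (I(2ρ) - I(ρ))` for `ρ ∈ (0, 1/4]`, then
`I(ρ) ≤ C' (log(1/ρ))^{-1/(1-α)}` for all `ρ ∈ (0, 1/4]`. -/
theorem log_decay_of_lojasiewicz (α C : ℝ) (hα : α ∈ Set.Ioo (0 : ℝ) 1)
    (hC : 1 ≤ C) :
    ∃ C' > (0 : ℝ), ∀ I : ℝ → ℝ,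
      MonotoneOn I (Set.Ioc (0 : ℝ) (1 / 2)) →
      (∀ ρ ∈ Set.Ioc (0 : ℝ) (1 / 2), 0 ≤ I ρ ∧ I ρ ≤ 1) →
      (∀ ρ ∈ Set.Ioc (0 : ℝ) (1 / 4), I ρ ^ (2 - α) ≤ C * (I (2 * ρ) - I ρ)) →
      ∀ ρ ∈ Set.Ioc (0 : ℝ) (1 / 4),
        I ρ ≤ C' * Real.log (1 / ρ) ^ (-(1 / (1 - α))) := by
  obtain ⟨hα0, hα1⟩ := hα
  set β : ℝ := 1 - α with hβ
  have hβ0 : 0 < β := by simp [hβ]; linarith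
  have hβ1 : β < 1 := by simp [hβ]; linarith
  have hC0 : 0 < C := lt_of_lt_of_le one_pos hC
  set c : ℝ := min (β / (2 * C)) (2 ^ β - 1) with hcdef
  have hc0 : 0 < c := by
    apply lt_min (by positivity)
    have : (1:ℝ) < 2 ^ β := Real.one_lt_rpow_iff_of_pos (by norm_num) |>.2 (Or.inl ⟨by norm_num, hβ0⟩)
    linarith
  have hlog2 : (0:ℝ) < Real.log 2 := Real.log_pos (by norm_num)
  set c'' : ℝ := min (1 / (6 * Real.log 2)) (c / (2 * Real.log 2)) with hc''def
  have hc''0 : 0 < c'' := lt_min (by positivity) (by positivity)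
  refine ⟨c'' ^ (-(1 / β)), Real.rpow_pos_of_pos hc''0 _, ?_⟩
  intro I hmonoI hbd hrecI ρ hρ
  obtain ⟨hρ0, hρ4⟩ := hρ
  -- the dyadic sequence
  set a : ℕ → ℝ := fun k => I ((1 / 2 : ℝ) ^ (k + 2)) with ha
  have hpmem : ∀ k : ℕ, ((1 / 2 : ℝ) ^ (k + 2)) ∈ Set.Ioc (0:ℝ) (1 / 2) := by
    intro k
    constructor
    · positivity
    · calc ((1:ℝ)/2) ^ (k + 2) ≤ (1/2) ^ 1 :=
            pow_le_pow_of_le_one (by norm_num) (by norm_num) (by omega)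
        _ = 1/2 := pow_one _
  have hp4 : ∀ k : ℕ, ((1 / 2 : ℝ) ^ (k + 2)) ≤ 1 / 4 := by
    intro k
    calc ((1:ℝ)/2) ^ (k + 2) ≤ (1/2) ^ 2 :=
          pow_le_pow_of_le_one (by norm_num) (by norm_num) (by omega)
      _ = 1/4 := by norm_num
  have h0 : ∀ k, 0 ≤ a k := fun k => (hbd _ (hpmem k)).1
  have h1 : ∀ k, a k ≤ 1 := fun k => (hbd _ (hpmem k)).2
  have hmono : ∀ k, a (k + 1) ≤ a k := by
    intro k
    apply hmonoI (hpmem (k + 1)) (hpmem k)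
    apply pow_le_pow_of_le_one (by norm_num) (by norm_num) (by omega)
  have hrec : ∀ k, a (k + 1) ^ (1 + β) ≤ C * (a k - a (k + 1)) := by
    intro k
    have h2p : 2 * ((1 / 2 : ℝ) ^ (k + 1 + 2)) = (1 / 2 : ℝ) ^ (k + 2) := by
      rw [pow_succ]; ring
    have := hrecI ((1 / 2 : ℝ) ^ (k + 1 + 2)) ⟨by positivity, hp4 (k + 1)⟩
    rw [h2p] at this
    have hexp : 2 - α = 1 + β := by simp [hβ]; ring
    rw [← hexp]
    exact this
  have hak : ∀ k : ℕ, a k ≤ (1 + c * k) ^ (-(1 / β)) :=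
    seq_bound hβ0 hβ1 hC a h0 h1 hmono hrec
  -- choose the scale
  set L : ℝ := Real.log (1 / ρ) with hL
  have h1ρ : (4:ℝ) ≤ 1 / ρ := by
    rw [le_div_iff₀ hρ0]; linarith
  have hLlb : 2 * Real.log 2 ≤ L := by
    have : Real.log 4 ≤ L := Real.log_le_log (by norm_num) h1ρ
    have h4 : Real.log 4 = 2 * Real.log 2 := by
      rw [show (4:ℝ) = 2 ^ 2 by norm_num, Real.log_pow]; push_cast; ring
    linarith
  have hL0 : 0 < L := by nlinarith
  set x : ℝ := L / Real.log 2 with hx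
  have hx2 : (2:ℝ) ≤ x := by
    rw [hx, le_div_iff₀ hlog2]; linarith
  set k : ℕ := ⌊x⌋₊ - 2 with hk
  have hfloor2 : 2 ≤ ⌊x⌋₊ := Nat.le_floor (by exact_mod_cast hx2)
  have hkcast : (k : ℝ) = (⌊x⌋₊ : ℝ) - 2 := by
    rw [hk, Nat.cast_sub hfloor2]; norm_num
  have hkx : (k : ℝ) + 2 ≤ x := by
    rw [hkcast]
    have := Nat.floor_le (le_trans (by norm_num) hx2)
    linarith
  have hklb : x - 3 ≤ (k : ℝ) := by
    rw [hkcast]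
    have := Nat.lt_floor_add_one x
    linarith
  -- ρ ≤ (1/2)^(k+2)
  have hρp : ρ ≤ (1 / 2 : ℝ) ^ (k + 2) := by
    have h2x : (2:ℝ) ^ ((k:ℝ) + 2) ≤ 1 / ρ := by
      have e1 : (2:ℝ) ^ x = 1 / ρ := by
        rw [Real.rpow_def_of_pos (by norm_num : (0:ℝ) < 2)]
        rw [hx]
        rw [mul_div_cancel₀ _ hlog2.ne']
        exact Real.exp_log (by positivity)
      calc (2:ℝ) ^ ((k:ℝ) + 2) ≤ (2:ℝ) ^ x :=
            Real.rpow_le_rpow_of_exponent_le one_le_two hkx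
        _ = 1 / ρ := e1
    have h2x' : (2:ℝ) ^ (k + 2 : ℕ) ≤ 1 / ρ := by
      rw [← Real.rpow_natCast 2 (k + 2)] at *
      convert h2x using 2
      push_cast; ring
    have hpow : ((1:ℝ)/2) ^ (k + 2) = ((2:ℝ) ^ (k + 2 : ℕ))⁻¹ := by
      rw [one_div, inv_pow]
    rw [hpow]
    rw [le_inv_comm₀ hρ0 (by positivity)]
    rwa [← one_div]
  -- conclude
  have hIa : I ρ ≤ a k :=
    hmonoI ⟨hρ0, le_trans hρ4 (by norm_num)⟩ (hpmem k) hρp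
  have hmid : c'' * L ≤ 1 + c * k := by
    by_cases hcase : L ≤ 6 * Real.log 2
    · have : c'' * L ≤ (1 / (6 * Real.log 2)) * L := by
        apply mul_le_mul_of_nonneg_right (min_le_left _ _) hL0.le
      have h1' : (1 / (6 * Real.log 2)) * L ≤ 1 := by
        rw [div_mul_eq_mul_div, one_mul, div_le_one (by positivity)]
        linarith
      nlinarith [mul_nonneg hc0.le (Nat.cast_nonneg k : (0:ℝ) ≤ k)]
    · push_neg at hcase
      have hk' : L / (2 * Real.log 2) ≤ (k : ℝ) := by
        have hx6 : (6:ℝ) < x := by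
          rw [hx, lt_div_iff₀ hlog2]; linarith
        have hhalf : L / (2 * Real.log 2) = x / 2 := by
          rw [hx, div_div, mul_comm]
        rw [hhalf]; linarith
      have : c'' * L ≤ (c / (2 * Real.log 2)) * L :=
        mul_le_mul_of_nonneg_right (min_le_right _ _) hL0.le
      have h2' : (c / (2 * Real.log 2)) * L ≤ c * k := by
        calc (c / (2 * Real.log 2)) * L = c * (L / (2 * Real.log 2)) := by ring
          _ ≤ c * k := mul_le_mul_of_nonneg_left hk' hc0.le
      linarith
  have hfin : (1 + c * k) ^ (-(1 / β)) ≤ (c'' * L) ^ (-(1 / β)) :=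
    Real.rpow_le_rpow_of_nonpos (by positivity) hmid (neg_nonpos.mpr (by positivity))
  have hsplit : (c'' * L) ^ (-(1 / β)) = c'' ^ (-(1 / β)) * L ^ (-(1 / β)) :=
    Real.mul_rpow hc''0.le hL0.le
  calc I ρ ≤ a k := hIa
    _ ≤ (1 + c * k) ^ (-(1 / β)) := hak k
    _ ≤ (c'' * L) ^ (-(1 / β)) := hfin
    _ = c'' ^ (-(1 / β)) * L ^ (-(1 / β)) := hsplit
    _ = c'' ^ (-(1 / β)) * Real.log (1 / ρ) ^ (-(1 / (1 - α))) := by rw [hL, hβ]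
end

section
/- Let n ≥ 2, let U ⊆ ℝⁿ be open and connected, and let K ⊆ ℝⁿ be a set whose (n-1)-dimensional Hausdorff measure is zero. Then U \ K is path-connected (in particular, connected). -/
open Set MeasureTheory Metric ENNReal NNReal Filter Topology

lemma aux_exists_cover {X : Type*} [EMetricSpace X] [MeasurableSpace X] [BorelSpace X]
    {d : ℝ} (hd : 0 < d) {B : Set X} (hB : μH[d] B = 0) {ε δ : ℝ≥0∞}
    (hε : 0 < ε) (hδ : 0 < δ) :
    ∃ t : ℕ → Set X, (B ⊆ ⋃ i, t i) ∧ (∀ i, EMetric.diam (t i) ≤ δ) ∧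
      ∑' i, EMetric.diam (t i) ^ d < ε := by
  rw [MeasureTheory.Measure.hausdorffMeasure_apply] at hB
  have h1 : (⨅ (t : ℕ → Set X) (_ : B ⊆ ⋃ n, t n) (_ : ∀ n, EMetric.diam (t n) ≤ δ),
      ∑' n, ⨆ _ : (t n).Nonempty, EMetric.diam (t n) ^ d) < ε := by
    refine lt_of_le_of_lt ?_ hε
    rw [← hB]
    exact le_iSup₂ (f := fun (r : ℝ≥0∞) (_ : 0 < r) =>
      ⨅ (t : ℕ → Set X) (_ : B ⊆ ⋃ n, t n) (_ : ∀ n, EMetric.diam (t n) ≤ r),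
        ∑' n, ⨆ _ : (t n).Nonempty, EMetric.diam (t n) ^ d) δ hδ
  obtain ⟨t, ht⟩ := iInf_lt_iff.1 h1
  obtain ⟨hcov, ht⟩ := iInf_lt_iff.1 ht
  obtain ⟨hdiam, hsum⟩ := iInf_lt_iff.1 ht
  refine ⟨t, hcov, hdiam, lt_of_le_of_lt (ENNReal.tsum_le_tsum fun i => ?_) hsum⟩
  rcases eq_empty_or_nonempty (t i) with h | h
  · simp [h, ENNReal.zero_rpow_of_pos hd, EMetric.diam]
  · simp [h]

lemma aux_rpow_add_le {d : ℝ} (hd : 0 ≤ d) (x y : ℝ≥0∞) :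
    (x + y) ^ d ≤ 2 ^ d * (x ^ d + y ^ d) := by
  calc (x + y) ^ d ≤ (2 * max x y) ^ d := by
        refine ENNReal.rpow_le_rpow ?_ hd
        rw [two_mul]
        exact add_le_add (le_max_left x y) (le_max_right x y)
    _ = 2 ^ d * (max x y) ^ d := ENNReal.mul_rpow_of_nonneg _ _ hd
    _ ≤ 2 ^ d * (x ^ d + y ^ d) := by
        refine mul_le_mul_right ?_ _
        rcases max_cases x y with ⟨h, _⟩ | ⟨h, _⟩ <;> rw [h]
        · exact le_add_right le_rfl
        · exact le_add_left le_rfl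

lemma aux_diam_prod_le {X Y : Type*} [PseudoEMetricSpace X] [PseudoEMetricSpace Y]
    (A : Set X) (B : Set Y) :
    EMetric.diam (A ×ˢ B) ≤ max (EMetric.diam A) (EMetric.diam B) := by
  refine EMetric.diam_le fun p hp q hq => ?_
  rw [Prod.edist_eq]
  exact max_le_max (EMetric.edist_le_diam_of_mem hp.1 hq.1)
    (EMetric.edist_le_diam_of_mem hp.2 hq.2)

lemma aux_prod_null {X : Type*} [MetricSpace X] [MeasurableSpace X] [BorelSpace X]
    {d : ℝ} (hd : 0 < d) (c₁ c₂ : ℝ) {B : Set X} (hB : μH[d] B = 0) :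
    μH[d + 1] ((Icc c₁ c₂) ×ˢ B) = 0 := by
  rcases le_or_gt c₁ c₂ with hc | hc
  swap
  · rw [Icc_eq_empty hc.not_ge, Set.empty_prod, measure_empty]
  set L : ℝ := c₂ - c₁ with hLdef
  have hL : 0 ≤ L := sub_nonneg.2 hc
  -- choose covers
  have H : ∀ j : ℕ, ∃ t : ℕ → Set X, (B ⊆ ⋃ i, t i) ∧
      (∀ i, EMetric.diam (t i) ≤ ENNReal.ofReal ((1/2) ^ j)) ∧
      ∑' i, EMetric.diam (t i) ^ d < ENNReal.ofReal ((1/2) ^ j) := by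
    intro j
    exact aux_exists_cover hd hB (ENNReal.ofReal_pos.2 (by positivity))
      (ENNReal.ofReal_pos.2 (by positivity))
  choose t hcov hdiam hsum using H
  set ℓ : ℕ → ℕ → ℝ := fun j i => (EMetric.diam (t j i)).toReal + (1/2) ^ j * (1/2) ^ i
    with hℓdef
  have hℓpos : ∀ j i, 0 < ℓ j i := fun j i =>
    add_pos_of_nonneg_of_pos ENNReal.toReal_nonneg (by positivity)
  have hne_top : ∀ j i, EMetric.diam (t j i) ≠ ⊤ := fun j i =>
    ((hdiam j i).trans_lt ENNReal.ofReal_lt_top).ne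
  have htR : ∀ j i, (EMetric.diam (t j i)).toReal ≤ (1/2) ^ j := fun j i =>
    ENNReal.toReal_le_of_le_ofReal (by positivity) (hdiam j i)
  have hℓle : ∀ j i, ℓ j i ≤ 2 * (1/2) ^ j := by
    intro j i
    have h1 : (1/2 : ℝ) ^ j * (1/2) ^ i ≤ (1/2) ^ j := by
      nlinarith [pow_le_one₀ (by norm_num : (0:ℝ) ≤ 1/2) (by norm_num : (1/2:ℝ) ≤ 1) (n := i),
        pow_pos (by norm_num : (0:ℝ) < 1/2) j]
    have := htR j i
    simp only [hℓdef]
    nlinarith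
  have hℓ2 : ∀ j i, ℓ j i ≤ 2 := fun j i => (hℓle j i).trans (by
    have : (1/2:ℝ) ^ j ≤ 1 := pow_le_one₀ (by norm_num) (by norm_num)
    nlinarith)
  have hdiam_le : ∀ j i, EMetric.diam (t j i) ≤ ENNReal.ofReal (ℓ j i) := by
    intro j i
    conv_lhs => rw [← ENNReal.ofReal_toReal (hne_top j i)]
    exact ENNReal.ofReal_le_ofReal (by
      have : (0:ℝ) < (1/2) ^ j * (1/2) ^ i := by positivity
      simp only [hℓdef]; linarith)
  -- the pieces
  set T : ℕ → ℕ × ℕ → Set (ℝ × X) := fun j p =>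
    (Icc (c₁ + p.2 * ℓ j p.1) (c₁ + (p.2 + 1) * ℓ j p.1) ∩ Icc c₁ c₂) ×ˢ t j p.1 with hTdef
  have hTdiam : ∀ j p, EMetric.diam (T j p) ≤ ENNReal.ofReal (ℓ j p.1) := by
    rintro j ⟨i, k⟩
    refine le_trans (aux_diam_prod_le _ _) (max_le ?_ (hdiam_le j i))
    refine le_trans (EMetric.diam_mono inter_subset_left) ?_
    rw [Real.ediam_Icc]
    exact ENNReal.ofReal_le_ofReal (by ring_nf; nlinarith [hℓpos j i])
  refine le_antisymm ?_ (zero_le)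
  have main := MeasureTheory.Measure.hausdorffMeasure_le_liminf_tsum (d + 1)
      ((Icc c₁ c₂) ×ˢ B) (l := atTop) (fun j => ENNReal.ofReal (2 * (1/2) ^ j)) ?_ T ?_ ?_

  · -- main estimate
    refine main.trans ?_
    set q : ℝ := (1/2 : ℝ) ^ d with hq
    have hq0 : 0 ≤ q := Real.rpow_nonneg (by norm_num) d
    have hq1 : q < 1 := Real.rpow_lt_one (by norm_num) (by norm_num) hd
    set Cd : ℝ≥0∞ := (1 - ENNReal.ofReal q)⁻¹ with hCd
    have hCd_ne_top : Cd ≠ ⊤ := by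
      rw [hCd]
      exact ENNReal.inv_ne_top.2 (tsub_pos_of_lt (ENNReal.ofReal_lt_one.2 hq1)).ne'
    set bound : ℕ → ℝ≥0∞ := fun j => ENNReal.ofReal (L + 2) *
      (2 ^ d * (ENNReal.ofReal ((1/2 : ℝ) ^ j) +
        ENNReal.ofReal (((1/2 : ℝ) ^ j) ^ d) * Cd)) with hbound
    have stepA : ∀ j, ∑' p : ℕ × ℕ, EMetric.diam (T j p) ^ (d + 1) ≤ bound j := by
      intro j
      rw [ENNReal.tsum_prod']
      have inner : ∀ i, ∑' k : ℕ, EMetric.diam (T j (i, k)) ^ (d + 1) ≤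
          ENNReal.ofReal (L + 2) * (ENNReal.ofReal (ℓ j i)) ^ d := by
        intro i
        set N := ⌊L / ℓ j i⌋₊ with hN
        have hzero : ∀ k ∉ Finset.range (N + 1), EMetric.diam (T j (i, k)) ^ (d + 1) = 0 := by
          intro k hk
          have hkN : N < k := by simpa [Finset.mem_range] using hk
          have hLk : L < k * ℓ j i :=
            (div_lt_iff₀ (hℓpos j i)).1 ((Nat.floor_lt (div_nonneg hL (hℓpos j i).le)).1 hkN)
          have hempty : Icc (c₁ + (k:ℝ) * ℓ j i) (c₁ + ((k:ℝ) + 1) * ℓ j i) ∩ Icc c₁ c₂ = ∅ := by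
            rw [eq_empty_iff_forall_notMem]
            rintro y ⟨⟨h1, _⟩, ⟨_, h4⟩⟩
            have : c₂ < c₁ + (k:ℝ) * ℓ j i := by simp only [hLdef] at hLk; linarith
            linarith
          have hTe : T j (i, k) = ∅ := by
            rw [hTdef]; simp only; rw [hempty]; exact Set.empty_prod
          rw [hTe]
          simp [ENNReal.zero_rpow_of_pos (by linarith : (0:ℝ) < d + 1), EMetric.diam]
        rw [tsum_eq_sum hzero]
        have hterm : ∀ k ∈ Finset.range (N + 1),
            EMetric.diam (T j (i, k)) ^ (d + 1) ≤ (ENNReal.ofReal (ℓ j i)) ^ (d + 1) :=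
          fun k _ => ENNReal.rpow_le_rpow (hTdiam j (i, k)) (by linarith)
        refine le_trans (Finset.sum_le_card_nsmul _ _ _ hterm) ?_
        rw [Finset.card_range, nsmul_eq_mul]
        have hsplit : (ENNReal.ofReal (ℓ j i)) ^ (d + 1) =
            ENNReal.ofReal (ℓ j i) ^ d * ENNReal.ofReal (ℓ j i) := by
          rw [ENNReal.rpow_add d 1 (ENNReal.ofReal_pos.2 (hℓpos j i)).ne'
            ENNReal.ofReal_ne_top, ENNReal.rpow_one]
        have h2 : ((N + 1 : ℕ) : ℝ≥0∞) * ENNReal.ofReal (ℓ j i) ≤ ENNReal.ofReal (L + 2) := by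
          rw [← ENNReal.ofReal_natCast (N + 1), ← ENNReal.ofReal_mul (by positivity)]
          refine ENNReal.ofReal_le_ofReal ?_
          push_cast
          have hNle : (N : ℝ) * ℓ j i ≤ L :=
            (le_div_iff₀ (hℓpos j i)).1 (Nat.floor_le (div_nonneg hL (hℓpos j i).le))
          have := hℓ2 j i
          have := (hℓpos j i).le
          nlinarith
        calc ((N + 1 : ℕ) : ℝ≥0∞) * ENNReal.ofReal (ℓ j i) ^ (d + 1)
            = ENNReal.ofReal (ℓ j i) ^ d * (((N + 1 : ℕ) : ℝ≥0∞) * ENNReal.ofReal (ℓ j i)) := by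
              rw [hsplit]; ring
          _ ≤ ENNReal.ofReal (ℓ j i) ^ d * ENNReal.ofReal (L + 2) := mul_le_mul_right h2 _
          _ = ENNReal.ofReal (L + 2) * ENNReal.ofReal (ℓ j i) ^ d := mul_comm _ _
      calc ∑' i, ∑' k : ℕ, EMetric.diam (T j (i, k)) ^ (d + 1)
          ≤ ∑' i, ENNReal.ofReal (L + 2) * (ENNReal.ofReal (ℓ j i)) ^ d :=
            ENNReal.tsum_le_tsum inner
        _ = ENNReal.ofReal (L + 2) * ∑' i, (ENNReal.ofReal (ℓ j i)) ^ d :=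
            ENNReal.tsum_mul_left
        _ ≤ bound j := by
            rw [hbound]
            refine mul_le_mul_right ?_ _
            have hsum2 : ∀ i, (ENNReal.ofReal (ℓ j i)) ^ d ≤
                2 ^ d * ((EMetric.diam (t j i)) ^ d +
                  (ENNReal.ofReal ((1/2 : ℝ) ^ j * (1/2 : ℝ) ^ i)) ^ d) := by
              intro i
              have hsplit2 : ENNReal.ofReal (ℓ j i) =
                  EMetric.diam (t j i) + ENNReal.ofReal ((1/2 : ℝ) ^ j * (1/2 : ℝ) ^ i) := by
                rw [hℓdef]
                simp only
                rw [ENNReal.ofReal_add ENNReal.toReal_nonneg (by positivity),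
                  ENNReal.ofReal_toReal (hne_top j i)]
              rw [hsplit2]
              exact aux_rpow_add_le hd.le _ _
            calc ∑' i, (ENNReal.ofReal (ℓ j i)) ^ d
                ≤ ∑' i, 2 ^ d * ((EMetric.diam (t j i)) ^ d +
                    (ENNReal.ofReal ((1/2 : ℝ) ^ j * (1/2 : ℝ) ^ i)) ^ d) :=
                  ENNReal.tsum_le_tsum hsum2
              _ = 2 ^ d * (∑' i, (EMetric.diam (t j i)) ^ d +
                    ∑' i, (ENNReal.ofReal ((1/2 : ℝ) ^ j * (1/2 : ℝ) ^ i)) ^ d) := by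
                  rw [ENNReal.tsum_mul_left, ENNReal.tsum_add]
              _ ≤ 2 ^ d * (ENNReal.ofReal ((1/2 : ℝ) ^ j) +
                    ENNReal.ofReal (((1/2 : ℝ) ^ j) ^ d) * Cd) := by
                  refine mul_le_mul_right (add_le_add (hsum j).le ?_) _
                  have heq : ∀ i : ℕ, (ENNReal.ofReal ((1/2 : ℝ) ^ j * (1/2 : ℝ) ^ i)) ^ d =
                      ENNReal.ofReal (((1/2 : ℝ) ^ j) ^ d) * (ENNReal.ofReal q) ^ i := by
                    intro i
                    rw [ENNReal.ofReal_rpow_of_nonneg (by positivity) hd.le]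
                    have hre : ((1/2 : ℝ) ^ j * (1/2 : ℝ) ^ i) ^ d =
                        ((1/2 : ℝ) ^ j) ^ d * q ^ i := by
                      rw [Real.mul_rpow (by positivity) (by positivity)]
                      congr 1
                      rw [hq, ← Real.rpow_natCast ((1/2 : ℝ)) i,
                        ← Real.rpow_natCast ((1/2 : ℝ) ^ (d:ℝ)) i,
                        ← Real.rpow_mul (by norm_num), ← Real.rpow_mul (by norm_num), mul_comm]
                    rw [hre, ENNReal.ofReal_mul (by positivity),
                      ENNReal.ofReal_pow hq0]
                  rw [tsum_congr heq, ENNReal.tsum_mul_left, ENNReal.tsum_geometric]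
    have hb : Tendsto bound atTop (𝓝 0) := by
      have c1 : (ENNReal.ofReal (L + 2) : ℝ≥0∞) ≠ ⊤ := ENNReal.ofReal_ne_top
      have c2 : (2 : ℝ≥0∞) ^ d ≠ ⊤ := ENNReal.rpow_ne_top_of_nonneg hd.le (by norm_num)
      have t1 : Tendsto (fun j : ℕ => ENNReal.ofReal ((1/2 : ℝ) ^ j)) atTop (𝓝 0) := by
        simpa using ENNReal.tendsto_ofReal
          (tendsto_pow_atTop_nhds_zero_of_lt_one (r := (1/2:ℝ)) (by norm_num) (by norm_num))
      have t2r : Tendsto (fun j : ℕ => ((1/2 : ℝ) ^ j) ^ d) atTop (𝓝 0) := by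
        have hjq : ∀ j : ℕ, ((1/2 : ℝ) ^ j) ^ d = q ^ j := by
          intro j
          rw [hq, ← Real.rpow_natCast ((1/2 : ℝ)) j,
            ← Real.rpow_natCast ((1/2 : ℝ) ^ (d:ℝ)) j,
            ← Real.rpow_mul (by norm_num), ← Real.rpow_mul (by norm_num), mul_comm]
        exact (tendsto_pow_atTop_nhds_zero_of_lt_one hq0 hq1).congr fun j => (hjq j).symm
      have t2 : Tendsto (fun j : ℕ => ENNReal.ofReal (((1/2 : ℝ) ^ j) ^ d) * Cd)
          atTop (𝓝 0) := by
        have := ENNReal.Tendsto.mul_const (ENNReal.tendsto_ofReal t2r) (Or.inr hCd_ne_top)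
        simpa using this
      have t3 := t1.add t2
      rw [add_zero] at t3
      have t4 := ENNReal.Tendsto.const_mul t3 (Or.inr c2)
      rw [mul_zero] at t4
      have t5 := ENNReal.Tendsto.const_mul t4 (Or.inr c1)
      rw [mul_zero] at t5
      exact t5
    refine le_trans (Filter.liminf_le_liminf (Filter.Eventually.of_forall stepA)) ?_
    rw [hb.liminf_eq]
  · -- tendsto r 0
    have h0 : Tendsto (fun j : ℕ => 2 * (1/2 : ℝ) ^ j) atTop (𝓝 0) := by
      simpa using (tendsto_pow_atTop_nhds_zero_of_lt_one (by norm_num : (0:ℝ) ≤ 1/2)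
        (by norm_num)).const_mul (2:ℝ)
    simpa using (ENNReal.tendsto_ofReal h0)
  · -- diam bounds
    refine Filter.Eventually.of_forall fun j => fun p => ?_
    exact (hTdiam j p).trans (ENNReal.ofReal_le_ofReal (hℓle j p.1))
  · -- covering
    refine Filter.Eventually.of_forall fun j => ?_
    rintro ⟨x, b⟩ ⟨hx, hb⟩
    obtain ⟨i, hi⟩ := mem_iUnion.1 (hcov j hb)
    have hxpos : 0 ≤ x - c₁ := sub_nonneg.2 hx.1
    set k := ⌊(x - c₁) / ℓ j i⌋₊ with hk
    refine mem_iUnion.2 ⟨(i, k), ⟨⟨?_, ?_⟩, hx⟩, hi⟩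
    · have h1 : (k : ℝ) ≤ (x - c₁) / ℓ j i := Nat.floor_le (div_nonneg hxpos (hℓpos j i).le)
      have := (le_div_iff₀ (hℓpos j i)).1 h1
      simp only []
      linarith
    · have h2 : (x - c₁) / ℓ j i < k + 1 := Nat.lt_floor_add_one _
      have := (div_lt_iff₀ (hℓpos j i)).1 h2
      simp only []
      linarith


lemma aux_volume_null {n : ℕ} {S : Set (EuclideanSpace ℝ (Fin n))}
    (h : μH[(n : ℝ)] S = 0) : volume S = 0 := by
  set e := (MeasurableEquiv.toLp 2 (Fin n → ℝ)).symm with he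
  have hlip : LipschitzWith 1 (⇑e) := by
    rw [he]
    exact PiLp.lipschitzWith_ofLp 2 _
  have him : μH[(n : ℝ)] (⇑e '' S) = 0 := by
    have h2 := hlip.hausdorffMeasure_image_le (show (0:ℝ) ≤ (n:ℝ) by positivity) S
    rw [h, mul_zero] at h2
    exact le_antisymm h2 (zero_le)
  have hpi : (μH[(n : ℝ)] : Measure (Fin n → ℝ)) = volume := by
    have := MeasureTheory.hausdorffMeasure_pi_real (ι := Fin n)
    simpa using this
  rw [hpi] at him
  obtain ⟨V, hV, hVm, hV0⟩ := exists_measurable_superset_of_null him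
  have hsub : S ⊆ ⇑e ⁻¹' V := (subset_preimage_image _ S).trans (preimage_mono hV)
  have hpre := (EuclideanSpace.volume_preserving_symm_measurableEquiv_toLp (Fin n)).measure_preimage
    hVm.nullMeasurableSet
  exact measure_mono_null hsub (by rw [← he] at hpre; rw [hpre, hV0])

lemma aux_shadow_null {n : ℕ} (hn : 2 ≤ n) {K : Set (EuclideanSpace ℝ (Fin n))}
    (hK : μH[(n : ℝ) - 1] K = 0) {a : EuclideanSpace ℝ (Fin n)} (ha : a ∉ K) (R : ℝ) :
    volume {z : EuclideanSpace ℝ (Fin n) |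
      z ∈ Metric.ball a R ∧ ¬ Disjoint (segment ℝ a z) K} = 0 := by
  apply aux_volume_null
  set F : ℝ × EuclideanSpace ℝ (Fin n) → EuclideanSpace ℝ (Fin n) :=
    fun p => a + p.1 • (p.2 - a) with hF
  set Km : ℕ → Set (EuclideanSpace ℝ (Fin n)) :=
    fun m => (K ∩ closedBall a R) \ ball a (R / (m + 1)) with hKm
  have hsub : {z : EuclideanSpace ℝ (Fin n) |
      z ∈ Metric.ball a R ∧ ¬ Disjoint (segment ℝ a z) K} ⊆
      ⋃ m : ℕ, F '' ((Icc (1 : ℝ) ((m : ℝ) + 1)) ×ˢ Km m) := by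
    rintro z ⟨hz, hcontact⟩
    rw [Set.not_disjoint_iff] at hcontact
    obtain ⟨k, hkseg, hkK⟩ := hcontact
    rw [segment_eq_image ℝ a z] at hkseg
    obtain ⟨s, hs01, hsk⟩ := hkseg
    simp only at hsk
    have hs0 : 0 < s := by
      rcases hs01.1.lt_or_eq with h | h
      · exact h
      · exfalso
        apply ha
        have hk : k = a := by rw [← hsk, ← h]; module
        rwa [hk] at hkK
    have hka : k - a = s • (z - a) := by rw [← hsk]; module
    have hza : z ≠ a := by
      intro heq
      apply ha
      have hk : k = a := by
        have : k - a = 0 := by rw [hka, heq]; simp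
        have := sub_eq_zero.1 this
        exact this
      rwa [hk] at hkK
    have hka_pos : 0 < ‖k - a‖ := by
      rw [hka, norm_smul]
      have h1 : z - a ≠ 0 := sub_ne_zero.2 hza
      have h2 : 0 < ‖z - a‖ := norm_pos_iff.2 h1
      have : |s| = s := abs_of_pos hs0
      rw [Real.norm_eq_abs, this]
      positivity
    have hdist : dist k a = s * dist z a := by
      rw [dist_eq_norm, dist_eq_norm, hka, norm_smul, Real.norm_eq_abs, abs_of_pos hs0]
    have hkR : dist k a < R := by
      have : dist z a < R := mem_ball.1 hz
      nlinarith [dist_nonneg (x := z) (y := a), hs01.2]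
    obtain ⟨m, hm0⟩ := exists_nat_ge (R / ‖k - a‖)
    have hm : R / ‖k - a‖ ≤ (m:ℝ) + 1 := hm0.trans (le_add_of_nonneg_right zero_le_one)
    refine mem_iUnion.2 ⟨m, ⟨(s⁻¹, k), ⟨⟨?_, ?_⟩, ⟨⟨hkK, ?_⟩, ?_⟩⟩, ?_⟩⟩
    · exact one_le_inv_iff₀.2 ⟨hs0, hs01.2⟩
    · -- s⁻¹ ≤ m + 1
      have hRk : R ≤ ((m:ℝ) + 1) * ‖k - a‖ := (div_le_iff₀ hka_pos).1 hm
      have hdza : dist z a = s⁻¹ * dist k a := by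
        rw [hdist, ← mul_assoc, inv_mul_cancel₀ hs0.ne', one_mul]
      have hdk : dist k a = ‖k - a‖ := dist_eq_norm k a
      have hmain : s⁻¹ * ‖k - a‖ < ((m:ℝ) + 1) * ‖k - a‖ := by
        calc s⁻¹ * ‖k - a‖ = dist z a := by rw [← hdk]; exact hdza.symm
          _ < R := mem_ball.1 hz
          _ ≤ ((m:ℝ) + 1) * ‖k - a‖ := hRk
      exact le_of_lt (lt_of_mul_lt_mul_right hmain hka_pos.le)
    · -- k ∈ closedBall a R
      exact mem_closedBall.2 hkR.le
    · -- k ∉ ball a (R/(m+1))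
      intro hball
      have h1 : dist k a < R / ((m:ℝ) + 1) := mem_ball.1 hball
      have h3 : R ≤ ((m:ℝ) + 1) * ‖k - a‖ := (div_le_iff₀ hka_pos).1 hm
      rw [dist_eq_norm] at h1
      have h4 : (0:ℝ) < (m:ℝ) + 1 := by positivity
      have h5 : R / ((m:ℝ) + 1) ≤ ‖k - a‖ := by
        rw [div_le_iff₀ h4]
        linarith
      exact absurd h1 (not_lt.2 h5)
    · -- F (s⁻¹, k) = z
      show a + s⁻¹ • (k - a) = z
      rw [hka, smul_smul, inv_mul_cancel₀ hs0.ne', one_smul]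
      abel
  refine measure_mono_null hsub (measure_iUnion_null fun m => ?_)
  -- Lipschitz image of a null product set
  have hKmnull : μH[(n : ℝ) - 1] (Km m) = 0 :=
    measure_mono_null (fun k hk => hk.1.1) hK
  have hprod : μH[((n : ℝ) - 1) + 1] ((Icc (1 : ℝ) ((m : ℝ) + 1)) ×ˢ Km m) = 0 :=
    aux_prod_null (by
      have : (2:ℝ) ≤ (n:ℝ) := by exact_mod_cast hn
      linarith) _ _ hKmnull
  have hprod' : μH[(n : ℝ)] ((Icc (1 : ℝ) ((m : ℝ) + 1)) ×ˢ Km m) = 0 := by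
    rw [show (n:ℝ) = ((n:ℝ) - 1) + 1 by ring]
    exact hprod
  set C : ℝ≥0 := Real.toNNReal (max R 0 + ((m:ℝ) + 1)) with hC
  have hlip : LipschitzOnWith C F ((Icc (1 : ℝ) ((m : ℝ) + 1)) ×ˢ Km m) := by
    refine LipschitzOnWith.of_dist_le_mul ?_
    rintro ⟨t, k⟩ ⟨ht, hk⟩ ⟨t', k'⟩ ⟨ht', hk'⟩
    have hCc : (C : ℝ) = max R 0 + ((m:ℝ) + 1) := by
      rw [hC, Real.coe_toNNReal]
      positivity
    have hkb : ‖k - a‖ ≤ max R 0 := by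
      have := mem_closedBall.1 hk.1.2
      rw [dist_eq_norm] at this
      exact this.trans (le_max_left _ _)
    have ht'b : |t'| ≤ (m:ℝ) + 1 := by
      rw [abs_of_nonneg (by linarith [ht'.1] : (0:ℝ) ≤ t')]
      exact ht'.2
    have hFd : dist (F (t, k)) (F (t', k')) = ‖t • (k - a) - t' • (k' - a)‖ := by
      rw [dist_eq_norm]
      congr 1
      show (a + t • (k - a)) - (a + t' • (k' - a)) = _
      abel
    have hsplit : t • (k - a) - t' • (k' - a) = (t - t') • (k - a) + t' • (k - k') := by
      module
    have hnorm : ‖t • (k - a) - t' • (k' - a)‖ ≤ |t - t'| * ‖k - a‖ + |t'| * ‖k - k'‖ := by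
      rw [hsplit]
      refine (norm_add_le _ _).trans ?_
      rw [norm_smul, norm_smul, Real.norm_eq_abs, Real.norm_eq_abs]
    have hdp : dist (t, k) (t', k') = max (dist t t') (dist k k') := Prod.dist_eq
    have h1 : |t - t'| ≤ dist (t, k) (t', k') := by
      rw [hdp]
      exact (le_max_left _ _).trans' (le_of_eq (Real.dist_eq t t').symm)
    have h2 : ‖k - k'‖ ≤ dist (t, k) (t', k') := by
      rw [hdp]
      exact (le_max_right _ _).trans' (le_of_eq (dist_eq_norm k k').symm)
    rw [hFd, hCc]
    have hd0 : 0 ≤ dist (t, k) (t', k') := dist_nonneg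
    calc ‖t • (k - a) - t' • (k' - a)‖ ≤ |t - t'| * ‖k - a‖ + |t'| * ‖k - k'‖ := hnorm
      _ ≤ dist (t, k) (t', k') * max R 0 + ((m:ℝ) + 1) * dist (t, k) (t', k') := by
          have e1 : |t - t'| * ‖k - a‖ ≤ dist (t, k) (t', k') * max R 0 := by
            have := mul_le_mul h1 hkb (norm_nonneg _) hd0
            linarith [this]
          have e2 : |t'| * ‖k - k'‖ ≤ ((m:ℝ) + 1) * dist (t, k) (t', k') := by
            have := mul_le_mul ht'b h2 (norm_nonneg _) (by positivity)
            linarith [this]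
          linarith
      _ = (max R 0 + ((m:ℝ) + 1)) * dist (t, k) (t', k') := by ring
  have := hlip.hausdorffMeasure_image_le (show (0:ℝ) ≤ (n:ℝ) by positivity)
  rw [hprod', mul_zero] at this
  exact le_antisymm this (zero_le)


lemma aux_ball_joined {n : ℕ} (hn : 2 ≤ n) {K : Set (EuclideanSpace ℝ (Fin n))}
    (hK : μH[(n : ℝ) - 1] K = 0) {c : EuclideanSpace ℝ (Fin n)} {r : ℝ} (hr : 0 < r)
    {x y : EuclideanSpace ℝ (Fin n)} (hx : x ∈ Metric.ball c r \ K)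
    (hy : y ∈ Metric.ball c r \ K) : JoinedIn (Metric.ball c r \ K) x y := by
  have hBx : volume {z : EuclideanSpace ℝ (Fin n) |
      z ∈ Metric.ball x (2 * r) ∧ ¬ Disjoint (segment ℝ x z) K} = 0 :=
    aux_shadow_null hn hK hx.2 (2 * r)
  have hBy : volume {z : EuclideanSpace ℝ (Fin n) |
      z ∈ Metric.ball y (2 * r) ∧ ¬ Disjoint (segment ℝ y z) K} = 0 :=
    aux_shadow_null hn hK hy.2 (2 * r)
  have hball : volume (Metric.ball c r) ≠ 0 := (measure_ball_pos volume c hr).ne'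
  have hne : (Metric.ball c r \ ({z : EuclideanSpace ℝ (Fin n) |
      z ∈ Metric.ball x (2 * r) ∧ ¬ Disjoint (segment ℝ x z) K} ∪
      {z : EuclideanSpace ℝ (Fin n) |
      z ∈ Metric.ball y (2 * r) ∧ ¬ Disjoint (segment ℝ y z) K})).Nonempty := by
    rw [nonempty_iff_ne_empty]
    intro hempty
    apply hball
    refine measure_mono_null ?_ (measure_union_null hBx hBy)
    rw [diff_eq_empty] at hempty
    exact hempty
  obtain ⟨z, hzball, hz⟩ := hne
  rw [mem_union, not_or] at hz
  have hzx : z ∈ Metric.ball x (2 * r) := by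
    rw [mem_ball] at *
    have := dist_triangle z c x
    have hxc : dist x c < r := mem_ball.1 hx.1
    rw [dist_comm c x] at *
    linarith [mem_ball.1 hx.1]
  have hzy : z ∈ Metric.ball y (2 * r) := by
    rw [mem_ball] at *
    have := dist_triangle z c y
    rw [dist_comm c y] at *
    linarith [mem_ball.1 hy.1]
  have hdx : Disjoint (segment ℝ x z) K := by
    by_contra h
    exact hz.1 ⟨hzx, h⟩
  have hdy : Disjoint (segment ℝ y z) K := by
    by_contra h
    exact hz.2 ⟨hzy, h⟩
  have hsx : segment ℝ x z ⊆ Metric.ball c r \ K :=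
    subset_diff.2 ⟨(convex_ball c r).segment_subset hx.1 hzball, hdx⟩
  have hsy : segment ℝ y z ⊆ Metric.ball c r \ K :=
    subset_diff.2 ⟨(convex_ball c r).segment_subset hy.1 hzball, hdy⟩
  exact (JoinedIn.of_segment_subset hsx).trans (JoinedIn.of_segment_subset hsy).symm

/-- Removing a set of `(n-1)`-dimensional Hausdorff measure zero from a
connected open subset of `ℝⁿ` (`n ≥ 2`) leaves a path-connected set. -/
theorem pathConnected_diff_of_hausdorffMeasure_zero (n : ℕ) (hn : 2 ≤ n)
    (U K : Set (EuclideanSpace ℝ (Fin n))) (hU : IsOpen U) (hUc : IsConnected U)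
    (hK : MeasureTheory.Measure.hausdorffMeasure ((n : ℝ) - 1) K = 0) :
    IsPathConnected (U \ K) := by
  have hKvol : volume K = 0 := by
    refine aux_volume_null (le_antisymm ?_ (zero_le))
    calc μH[(n : ℝ)] K ≤ μH[(n : ℝ) - 1] K :=
          MeasureTheory.Measure.hausdorffMeasure_mono (by linarith) K
      _ = 0 := hK
  have hballne : ∀ (c : EuclideanSpace ℝ (Fin n)) (r : ℝ), 0 < r →
      (Metric.ball c r \ K).Nonempty := by
    intro c r hr
    rw [nonempty_iff_ne_empty]
    intro hempty
    rw [diff_eq_empty] at hempty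
    exact (measure_ball_pos volume c hr).ne' (measure_mono_null hempty hKvol)
  have hUopen := Metric.isOpen_iff.1 hU
  have hUne : (U \ K).Nonempty := by
    obtain ⟨u, hu⟩ := hUc.nonempty
    obtain ⟨r, hr, hball⟩ := hUopen u hu
    obtain ⟨w, hw1, hw2⟩ := hballne u r hr
    exact ⟨w, hball hw1, hw2⟩
  obtain ⟨a₀, ha₀U, ha₀K⟩ := hUne
  have hlocal : ∀ {c : EuclideanSpace ℝ (Fin n)} {r : ℝ}
      {x y : EuclideanSpace ℝ (Fin n)}, 0 < r → Metric.ball c r ⊆ U →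
      x ∈ Metric.ball c r \ K → y ∈ Metric.ball c r \ K → JoinedIn (U \ K) x y :=
    fun hr hb hx hy =>
      (aux_ball_joined hn hK hr hx hy).mono (diff_subset_diff_left hb)
  set S := {x : EuclideanSpace ℝ (Fin n) | x ∈ U ∧ ∃ r > 0, Metric.ball x r ⊆ U ∧
      ∀ y ∈ Metric.ball x r \ K, JoinedIn (U \ K) a₀ y} with hS
  have ha₀S : a₀ ∈ S := by
    obtain ⟨r, hr, hball⟩ := hUopen a₀ ha₀U
    exact ⟨ha₀U, r, hr, hball, fun y hy =>
      hlocal hr hball ⟨mem_ball_self hr, ha₀K⟩ hy⟩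
  have hSopen : IsOpen S := by
    rw [Metric.isOpen_iff]
    rintro x ⟨hxU, r, hr, hball, hprop⟩
    refine ⟨r, hr, ?_⟩
    intro x' hx'
    have hr' : 0 < r - dist x' x := by
      rw [mem_ball] at hx'
      linarith
    have hsub : Metric.ball x' (r - dist x' x) ⊆ Metric.ball x r := by
      intro w hw
      rw [mem_ball] at *
      have := dist_triangle w x' x
      linarith
    exact ⟨hball (hx' : x' ∈ Metric.ball x r), r - dist x' x, hr',
      hsub.trans hball, fun y hy => hprop y ⟨hsub hy.1, hy.2⟩⟩
  have hUSopen : IsOpen (U \ S) := by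
    rw [Metric.isOpen_iff]
    rintro x ⟨hxU, hxS⟩
    obtain ⟨r, hr, hball⟩ := hUopen x hxU
    refine ⟨r, hr, ?_⟩
    intro x' hx'
    refine ⟨hball hx', fun hx'S => ?_⟩
    obtain ⟨hx'U, r', hr', hball', hprop'⟩ := hx'S
    set t := min r' (r - dist x' x) with ht
    have htpos : 0 < t := by
      rw [ht]
      refine lt_min hr' ?_
      rw [mem_ball] at hx'
      linarith
    have htsub1 : Metric.ball x' t ⊆ Metric.ball x' r' :=
      Metric.ball_subset_ball (min_le_left _ _)
    have htsub2 : Metric.ball x' t ⊆ Metric.ball x r := by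
      intro w hw
      rw [mem_ball] at *
      have h1 := dist_triangle w x' x
      have h2 : dist w x' < r - dist x' x := lt_of_lt_of_le hw (min_le_right _ _)
      linarith
    obtain ⟨y, hy1, hy2⟩ := hballne x' t htpos
    have hjoin : JoinedIn (U \ K) a₀ y := hprop' y ⟨htsub1 hy1, hy2⟩
    apply hxS
    refine ⟨hxU, r, hr, hball, fun w hw => ?_⟩
    exact hjoin.trans (hlocal hr hball ⟨htsub2 hy1, hy2⟩ hw)
  have hUS : U ⊆ S := by
    by_contra hcon
    rw [not_subset] at hcon
    obtain ⟨x, hxU, hxS⟩ := hcon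
    obtain ⟨w, hw⟩ := hUc.isPreconnected S (U \ S) hSopen hUSopen
      (fun u hu => by
        by_cases h : u ∈ S
        · exact Or.inl h
        · exact Or.inr ⟨hu, h⟩)
      ⟨a₀, ha₀U, ha₀S⟩ ⟨x, hxU, hxU, hxS⟩
    exact hw.2.2.2 hw.2.1
  refine ⟨a₀, ⟨ha₀U, ha₀K⟩, ?_⟩
  intro y hy
  obtain ⟨-, r, hr, hball, hprop⟩ := hUS hy.1
  exact hprop y ⟨mem_ball_self hr, hy.2⟩
end
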